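/- arXiv:1312.1498 — 4 statements merged into one kernel-verified Lean document; each statement's English description precedes it below -/
import Mathlib

section
/- For the Lévy measure ν(ds) = (α/Γ(1-α)) s^{-α-1} e^{-θ s} ds with 0 < α < 1 and θ > 0, the associated Bernšteĭn function equals f(x) = (x+θ)^α - θ^α for all x ≥ 0, i.e. ∫_0^∞ (1 - e^{-s x}) (α/Γ(1-α)) s^{-α-1} e^{-θ s} ds = (x+θ)^α - θ^α. -/
open MeasureTheory Real Set Filter

lemma one_sub_exp_neg_le (t : ℝ) : 1 - Real.exp (-t) ≤ t := by
  have := Real.add_one_le_exp (-t)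
  linarith

lemma one_sub_exp_neg_nonneg {t : ℝ} (ht : 0 ≤ t) : 0 ≤ 1 - Real.exp (-t) := by
  have : Real.exp (-t) ≤ 1 := Real.exp_le_one_iff.mpr (by linarith)
  linarith

lemma bernstein_integrable_aux (α c : ℝ) (hα : 0 < α) (hα1 : α < 1) (hc : 0 < c) :
    IntegrableOn (fun s : ℝ => (1 - Real.exp (-(c * s))) * s ^ (-α - 1)) (Ioi 0) := by
  have hmeas : ∀ t : Set ℝ, t ⊆ Ioi 0 → MeasurableSet t →
      AEStronglyMeasurable (fun s : ℝ => (1 - Real.exp (-(c * s))) * s ^ (-α - 1))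
        (volume.restrict t) := by
    intro t ht htm
    apply ContinuousOn.aestronglyMeasurable ?_ htm
    intro s hs
    have hs0 : s ≠ 0 := ne_of_gt (ht hs)
    exact ContinuousWithinAt.mul
      (Continuous.continuousWithinAt (by continuity))
      ((Real.continuousAt_rpow_const s _ (Or.inl hs0)).continuousWithinAt)
  have hsplit : Ioi (0:ℝ) = Ioc 0 1 ∪ Ioi 1 := by
    rw [Set.Ioc_union_Ioi_eq_Ioi]; norm_num
  rw [hsplit]
  apply IntegrableOn.union
  · -- near zero: bound by c * s ^ (-α)
    have hg : IntegrableOn (fun s : ℝ => c * s ^ (-α)) (Ioc 0 1) := by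
      apply Integrable.const_mul
      have : IntervalIntegrable (fun s : ℝ => s ^ (-α)) volume 0 1 :=
        intervalIntegral.intervalIntegrable_rpow' (by linarith)
      exact (intervalIntegrable_iff_integrableOn_Ioc_of_le zero_le_one).mp this
    refine Integrable.mono' hg (hmeas _ (fun s hs => hs.1) measurableSet_Ioc) ?_
    filter_upwards [ae_restrict_mem measurableSet_Ioc] with s hs
    have hs0 : 0 < s := hs.1
    have hcs : 0 ≤ c * s := by positivity
    have h1 : 0 ≤ 1 - Real.exp (-(c * s)) := one_sub_exp_neg_nonneg hcs
    have h2 : 1 - Real.exp (-(c * s)) ≤ c * s := one_sub_exp_neg_le _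
    have hrp : (0:ℝ) ≤ s ^ (-α - 1) := Real.rpow_nonneg hs0.le _
    rw [Real.norm_eq_abs, abs_of_nonneg (mul_nonneg h1 hrp)]
    calc (1 - Real.exp (-(c * s))) * s ^ (-α - 1) ≤ (c * s) * s ^ (-α - 1) := by
          exact mul_le_mul_of_nonneg_right h2 hrp
      _ = c * s ^ (-α) := by
          have h' := Real.rpow_add hs0 1 (-α - 1)
          rw [Real.rpow_one] at h'
          rw [mul_assoc, ← h', show (1:ℝ) + (-α - 1) = -α by ring]
  · -- at infinity: bound by s ^ (-α - 1)
    have hg : IntegrableOn (fun s : ℝ => s ^ (-α - 1)) (Ioi 1) :=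
      integrableOn_Ioi_rpow_of_lt (by linarith) one_pos
    refine Integrable.mono' hg (hmeas _ (fun s hs => mem_Ioi.mpr (lt_trans one_pos (mem_Ioi.mp hs))) measurableSet_Ioi) ?_
    filter_upwards [ae_restrict_mem measurableSet_Ioi] with s hs
    have hs0 : 0 < s := lt_trans one_pos hs
    have hcs : 0 ≤ c * s := by positivity
    have h1 : 0 ≤ 1 - Real.exp (-(c * s)) := one_sub_exp_neg_nonneg hcs
    have h2 : 1 - Real.exp (-(c * s)) ≤ 1 := by
      have := Real.exp_pos (-(c * s)); linarith
    have hrp : (0:ℝ) ≤ s ^ (-α - 1) := Real.rpow_nonneg hs0.le _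
    rw [Real.norm_eq_abs, abs_of_nonneg (mul_nonneg h1 hrp)]
    nlinarith [mul_le_mul_of_nonneg_right h2 hrp]

lemma bernstein_exp_integrable (α c : ℝ) (hα : 0 < α) (hα1 : α < 1) (hc : 0 < c) :
    IntegrableOn (fun s : ℝ => s ^ (-α) * Real.exp (-(c * s))) (Ioi 0) := by
  have := integrableOn_rpow_mul_exp_neg_mul_rpow
    (show (-1:ℝ) < -α by linarith) (zero_lt_one : (0:ℝ) < 1) hc
  refine this.congr_fun (fun s hs => ?_) measurableSet_Ioi
  simp only [Real.rpow_one, neg_mul]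

lemma bernstein_J (α c : ℝ) (hα : 0 < α) (hα1 : α < 1) (hc : 0 < c) :
    ∫ s in Ioi (0:ℝ), (1 - Real.exp (-(c * s))) * s ^ (-α - 1)
      = Real.Gamma (1 - α) * c ^ α / α := by
  set G : ℝ → ℝ := fun s => -(1 - Real.exp (-(c * s))) * s ^ (-α) / α with hG
  set g : ℝ → ℝ := fun s =>
    (1 - Real.exp (-(c * s))) * s ^ (-α - 1) - c / α * (s ^ (-α) * Real.exp (-(c * s))) with hg
  have hderiv : ∀ s ∈ Ioi (0:ℝ), HasDerivAt G (g s) s := by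
    intro s hs
    have hs0 : (0:ℝ) < s := hs
    have h1 : HasDerivAt (fun s : ℝ => 1 - Real.exp (-(c * s))) (c * Real.exp (-(c * s))) s := by
      have : HasDerivAt (fun s : ℝ => Real.exp (-(c * s))) (Real.exp (-(c * s)) * (-c)) s := by
        have hlin : HasDerivAt (fun s : ℝ => -(c * s)) (-c) s := by
          simpa using ((hasDerivAt_id s).const_mul c).fun_neg
        exact (Real.hasDerivAt_exp _).comp s hlin
      have := this.const_sub 1
      convert this using 1
      · rfl
      · rfl
      ring
    have h2 : HasDerivAt (fun s : ℝ => s ^ (-α)) (-α * s ^ (-α - 1)) s :=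
      Real.hasDerivAt_rpow_const (Or.inl (ne_of_gt hs0))
    have h3 := (h1.mul h2).div_const α
    have h4 := h3.fun_neg
    convert h4 using 1
    · rfl
    · rfl
    · funext t
      simp only [hG, Pi.mul_apply]
      ring
    · simp only [hg]
      field_simp
      ring
  have hcont : ContinuousWithinAt G (Ici (0:ℝ)) 0 := by
    have hG0 : G 0 = 0 := by
      simp [hG, Real.zero_rpow (by linarith : -α ≠ 0)]
    rw [ContinuousWithinAt, hG0]
    apply squeeze_zero_norm' (a := fun s : ℝ => c / α * s ^ (1 - α))
    · filter_upwards [self_mem_nhdsWithin] with s hs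
      rcases eq_or_lt_of_le (mem_Ici.mp hs) with h | h
      · rw [← h, hG0]
        simp only [norm_zero]
        positivity
      · have hcs : 0 ≤ c * s := by positivity
        have h1 : 0 ≤ 1 - Real.exp (-(c * s)) := one_sub_exp_neg_nonneg hcs
        have h2 : 1 - Real.exp (-(c * s)) ≤ c * s := one_sub_exp_neg_le _
        have hrp : (0:ℝ) ≤ s ^ (-α) := Real.rpow_nonneg h.le _
        have hGs : ‖G s‖ = (1 - Real.exp (-(c * s))) * s ^ (-α) / α := by
          rw [Real.norm_eq_abs, hG]
          rw [abs_of_nonpos]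
          · ring
          · apply div_nonpos_of_nonpos_of_nonneg _ hα.le
            nlinarith [mul_nonneg h1 hrp]
        rw [hGs]
        rw [div_le_iff₀ hα]
        calc (1 - Real.exp (-(c * s))) * s ^ (-α) ≤ (c * s) * s ^ (-α) :=
              mul_le_mul_of_nonneg_right h2 hrp
          _ = c * s ^ (1 - α) := by
              have h' := Real.rpow_add h 1 (-α)
              rw [Real.rpow_one] at h'
              rw [mul_assoc, ← h', show (1:ℝ) + -α = 1 - α by ring]
          _ = c / α * s ^ (1 - α) * α := by field_simp
    · have h0 : Tendsto (fun s : ℝ => s ^ (1 - α)) (nhds 0) (nhds 0) := by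
        have := (Real.continuousAt_rpow_const 0 (1 - α) (Or.inr (by linarith)))
        have h00 : (0:ℝ) ^ (1 - α) = 0 := Real.zero_rpow (by linarith)
        simpa [ContinuousAt, h00] using this
      have := (h0.const_mul (c / α)).mono_left (nhdsWithin_le_nhds (s := Ici (0:ℝ)))
      simpa using this
  have htop : Tendsto G atTop (nhds 0) := by
    apply squeeze_zero_norm' (a := fun s : ℝ => (1 / α) * s ^ (-α))
    · filter_upwards [eventually_gt_atTop (0:ℝ)] with s hs
      have hcs : 0 ≤ c * s := by positivity
      have h1 : 0 ≤ 1 - Real.exp (-(c * s)) := one_sub_exp_neg_nonneg hcs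
      have h2 : 1 - Real.exp (-(c * s)) ≤ 1 := by
        have := Real.exp_pos (-(c * s)); linarith
      have hrp : (0:ℝ) ≤ s ^ (-α) := Real.rpow_nonneg hs.le _
      have hGs : ‖G s‖ = (1 - Real.exp (-(c * s))) * s ^ (-α) / α := by
        rw [Real.norm_eq_abs, hG]
        rw [abs_of_nonpos]
        · ring
        · apply div_nonpos_of_nonpos_of_nonneg _ hα.le
          nlinarith [mul_nonneg h1 hrp]
      rw [hGs, div_le_iff₀ hα]
      calc (1 - Real.exp (-(c * s))) * s ^ (-α) ≤ 1 * s ^ (-α) :=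
            mul_le_mul_of_nonneg_right h2 hrp
        _ = 1 / α * s ^ (-α) * α := by field_simp
    · have := (tendsto_rpow_neg_atTop hα).const_mul (1 / α)
      simpa using this
  have hint1 : IntegrableOn (fun s : ℝ => (1 - Real.exp (-(c * s))) * s ^ (-α - 1)) (Ioi 0) :=
    bernstein_integrable_aux α c hα hα1 hc
  have hint2 : IntegrableOn (fun s : ℝ => s ^ (-α) * Real.exp (-(c * s))) (Ioi 0) :=
    bernstein_exp_integrable α c hα hα1 hc
  have hgint : IntegrableOn g (Ioi 0) := hint1.sub (hint2.const_mul (c / α))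
  have hFTC := integral_Ioi_of_hasDerivAt_of_tendsto hcont hderiv hgint htop
  have hG0 : G 0 = 0 := by
    simp [hG, Real.zero_rpow (by linarith : -α ≠ 0)]
  rw [hG0, sub_zero] at hFTC
  -- ∫ g = 0; g = f - (c/α) * h, so ∫ f = (c/α) * ∫ h
  have hsub : ∫ s in Ioi (0:ℝ), g s
      = (∫ s in Ioi (0:ℝ), (1 - Real.exp (-(c * s))) * s ^ (-α - 1))
        - c / α * ∫ s in Ioi (0:ℝ), s ^ (-α) * Real.exp (-(c * s)) := by
    rw [hg]
    rw [integral_sub hint1 (hint2.const_mul (c / α))]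
    rw [integral_const_mul]
  have hhval : ∫ s in Ioi (0:ℝ), s ^ (-α) * Real.exp (-(c * s))
      = (1 / c) ^ (1 - α) * Real.Gamma (1 - α) := by
    have := Real.integral_rpow_mul_exp_neg_mul_Ioi (a := 1 - α) (r := c)
      (by linarith) hc
    convert this using 2 with s
    norm_num
  rw [hFTC, hhval] at hsub
  have hkey : (∫ s in Ioi (0:ℝ), (1 - Real.exp (-(c * s))) * s ^ (-α - 1))
      = c / α * ((1 / c) ^ (1 - α) * Real.Gamma (1 - α)) := by linarith
  rw [hkey]
  have hc1 : (1 / c) ^ (1 - α) = c ^ (α - 1) := by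
    rw [one_div, Real.inv_rpow hc.le, ← Real.rpow_neg hc.le, show -(1 - α) = α - 1 by ring]
  rw [hc1]
  have : c * c ^ (α - 1) = c ^ α := by
    nth_rewrite 1 [← Real.rpow_one c]
    rw [← Real.rpow_add hc]
    ring_nf
  field_simp
  rw [this]
  ring

/-- For the Lévy measure ν(ds) = (α/Γ(1-α)) s^{-α-1} e^{-θ s} ds on (0,∞), with
0 < α < 1 and θ > 0, the associated Bernšteĭn function is f(x) = (x+θ)^α - θ^α. -/
theorem bernstein_tempered (α θ x : ℝ) (hα : 0 < α) (hα1 : α < 1) (hθ : 0 < θ)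
    (hx : 0 ≤ x) :
    ∫ s in Set.Ioi (0:ℝ),
        (1 - Real.exp (-s * x)) * (α / Real.Gamma (1 - α) * s ^ (-α - 1) * Real.exp (-θ * s))
      = (x + θ) ^ α - θ ^ α := by
  have hxθ : 0 < x + θ := by linarith
  set K := α / Real.Gamma (1 - α) with hK
  have hΓ : 0 < Real.Gamma (1 - α) := Real.Gamma_pos_of_pos (by linarith)
  have hcongr : ∀ s ∈ Ioi (0:ℝ),
      (1 - Real.exp (-s * x)) * (K * s ^ (-α - 1) * Real.exp (-θ * s))
      = K * ((1 - Real.exp (-((x + θ) * s))) * s ^ (-α - 1))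
        - K * ((1 - Real.exp (-(θ * s))) * s ^ (-α - 1)) := by
    intro s _
    have hexp : Real.exp (-s * x) * Real.exp (-(θ * s)) = Real.exp (-((x + θ) * s)) := by
      rw [← Real.exp_add]
      ring_nf
    rw [neg_mul θ s, ← hexp]
    ring
  rw [setIntegral_congr_fun measurableSet_Ioi hcongr]
  have hint1 := (bernstein_integrable_aux α (x + θ) hα hα1 hxθ).const_mul K
  have hint2 := (bernstein_integrable_aux α θ hα hα1 hθ).const_mul K
  rw [integral_sub hint1 hint2, integral_const_mul, integral_const_mul,
    bernstein_J α (x + θ) hα hα1 hxθ, bernstein_J α θ hα hα1 hθ, hK]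
  field_simp
end

section
/- Let λ > 0 and f a Bernšteĭn function with Lévy measure ν so that f(λ) = ∫_0^∞ (1-e^{-λs}) ν(ds) and ∫_0^∞ e^{-λs} s^m ν(ds) < ∞ for all m ≥ 1. If p_k(t) = ((-1)^k/k!) d^k/du^k [e^{-t f(λ u)}]|_{u=1} for k ≥ 0, then for each k and t > 0, d/dt p_k(t) = -f(λ) p_k(t) + Σ_{m=1}^{k} (λ^m/m!) p_{k-m}(t) ∫_0^∞ e^{-λ s} s^m ν(ds). -/
open MeasureTheory Set Filter Topology Metric

set_option linter.unusedSectionVars false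
set_option linter.unusedVariables false
set_option maxHeartbeats 1000000

namespace SPE


noncomputable def II (ν : Measure ℝ) (m : ℕ) (x : ℝ) : ℝ :=
  ∫ s in Set.Ioi (0:ℝ), Real.exp (-x*s) * s^m ∂ν

lemma integrable_min {ν : Measure ℝ}
    (hν : ∫⁻ s in Set.Ioi (0:ℝ), ENNReal.ofReal (min s 1) ∂ν < ⊤) :
    IntegrableOn (fun s => min s 1) (Set.Ioi 0) ν := by
  constructor
  · exact (continuous_id.min continuous_const).aestronglyMeasurable
  · rw [hasFiniteIntegral_iff_ofReal]
    · exact hν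
    · filter_upwards [ae_restrict_mem measurableSet_Ioi] with s hs
      simp only [Pi.zero_apply]
      have : (0:ℝ) < s := hs
      positivity

lemma exp_mul_pow_le {x s : ℝ} (hx : 0 < x) (hs : 0 < s) {m : ℕ} (hm : 1 ≤ m) :
    Real.exp (-x*s) * s^m ≤ ((Nat.factorial m : ℝ) / x^m + 1) * min s 1 := by
  have hfac : (0:ℝ) < (Nat.factorial m : ℝ) / x^m := by positivity
  rcases le_or_gt s 1 with h1 | h1
  · rw [min_eq_left h1]
    have h2 : Real.exp (-x*s) ≤ 1 := Real.exp_le_one_iff.mpr (by nlinarith)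
    have h3 : s^m ≤ s := by
      calc s^m ≤ s^1 := pow_le_pow_of_le_one hs.le h1 hm
      _ = s := pow_one s
    nlinarith [pow_pos hs m]
  · rw [min_eq_right h1.le]
    have key : (x*s)^m / (Nat.factorial m : ℝ) ≤ Real.exp (x*s) := by
      refine le_trans ?_ (Real.sum_le_exp_of_nonneg (by positivity) (m+1))
      exact Finset.single_le_sum (f := fun i => (x*s)^i / (Nat.factorial i : ℝ))
        (fun i _ => by positivity) (Finset.self_mem_range_succ m)
    have key2 : (x*s)^m ≤ (Nat.factorial m : ℝ) * Real.exp (x*s) := by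
      rw [div_le_iff₀ (by positivity)] at key
      linarith [key]
    rw [show -x*s = -(x*s) by ring, Real.exp_neg]
    rw [inv_mul_eq_div, div_le_iff₀ (Real.exp_pos _)]
    rw [mul_pow] at key2
    have hxm : (0:ℝ) < x^m := by positivity
    have : s^m ≤ ((Nat.factorial m : ℝ) / x^m) * Real.exp (x*s) := by
      rw [div_mul_eq_mul_div, le_div_iff₀ hxm]
      nlinarith [key2]
    nlinarith [Real.exp_pos (x*s), this]

lemma integrableOn_exp_pow {ν : Measure ℝ}
    (hν : ∫⁻ s in Set.Ioi (0:ℝ), ENNReal.ofReal (min s 1) ∂ν < ⊤)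
    {x : ℝ} (hx : 0 < x) {m : ℕ} (hm : 1 ≤ m) :
    IntegrableOn (fun s => Real.exp (-x*s) * s^m) (Set.Ioi 0) ν := by
  refine Integrable.mono' ((integrable_min hν).const_mul ((Nat.factorial m : ℝ) / x^m + 1)) ?_ ?_
  · exact (((Real.continuous_exp.comp (continuous_const.mul continuous_id)).mul
      (continuous_pow m))).aestronglyMeasurable
  · filter_upwards [ae_restrict_mem measurableSet_Ioi] with s hs
    have hs' : (0:ℝ) < s := hs
    rw [Real.norm_eq_abs, abs_of_nonneg (by positivity)]
    exact exp_mul_pow_le hx hs' hm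

lemma integrableOn_one_sub {ν : Measure ℝ}
    (hν : ∫⁻ s in Set.Ioi (0:ℝ), ENNReal.ofReal (min s 1) ∂ν < ⊤)
    {x : ℝ} (hx : 0 ≤ x) :
    IntegrableOn (fun s => 1 - Real.exp (-x*s)) (Set.Ioi 0) ν := by
  refine Integrable.mono' ((integrable_min hν).const_mul (x + 1)) ?_ ?_
  · exact (continuous_const.sub
      (Real.continuous_exp.comp (continuous_const.mul continuous_id))).aestronglyMeasurable
  · filter_upwards [ae_restrict_mem measurableSet_Ioi] with s hs
    have hs' : (0:ℝ) < s := hs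
    have h2 : Real.exp (-x*s) ≤ 1 := Real.exp_le_one_iff.mpr (by nlinarith)
    rw [Real.norm_eq_abs, abs_of_nonneg (by nlinarith)]
    rcases le_or_gt s 1 with h1 | h1
    · rw [min_eq_left h1]
      have h3 : 1 - x*s ≤ Real.exp (-(x*s)) := by
        have := Real.add_one_le_exp (-(x*s)); linarith
      rw [show -x*s = -(x*s) by ring]
      nlinarith [Real.exp_pos (-x*s)]
    · rw [min_eq_right h1.le]
      nlinarith [Real.exp_pos (-x*s)]




variable {ν : Measure ℝ} {f : ℝ → ℝ} {lam : ℝ}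
variable (hν : ∫⁻ s in Set.Ioi (0:ℝ), ENNReal.ofReal (min s 1) ∂ν < ⊤)

-- bound for x' in ball x (x/2)
lemma ball_bound {x : ℝ} (hx : 0 < x) {y : ℝ} (hy : y ∈ ball x (x/2)) : x/2 < y := by
  rw [mem_ball, Real.dist_eq, abs_sub_lt_iff] at hy
  linarith [hy.2]

include hν in
lemma hasDerivAt_II (m : ℕ) (hm : 1 ≤ m) {x : ℝ} (hx : 0 < x) :
    HasDerivAt (II ν m) (-(II ν (m+1) x)) x := by
  have h := hasDerivAt_integral_of_dominated_loc_of_deriv_le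
    (μ := ν.restrict (Set.Ioi 0))
    (F := fun y s => Real.exp (-y*s) * s^m)
    (F' := fun y s => -(Real.exp (-y*s) * s^(m+1)))
    (x₀ := x)
    (bound := fun s => ((Nat.factorial (m+1) : ℝ) / (x/2)^(m+1) + 1) * min s 1)
    (ball_mem_nhds x (half_pos hx))
    (Eventually.of_forall fun y =>
      (((Real.continuous_exp.comp (continuous_const.mul continuous_id)).mul
        (continuous_pow m))).aestronglyMeasurable)
    (integrableOn_exp_pow hν hx hm)
    (((((Real.continuous_exp.comp (continuous_const.mul continuous_id)).mul
        (continuous_pow (m+1)))).neg).aestronglyMeasurable)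
    ?_ (((integrable_min hν).const_mul _)) ?_
  · have := h.2
    rwa [integral_neg] at this
  · filter_upwards [ae_restrict_mem measurableSet_Ioi] with s hs y hy
    have hs' : (0:ℝ) < s := hs
    have hy' : x/2 < y := ball_bound hx hy
    rw [norm_neg, Real.norm_eq_abs, abs_of_nonneg (by positivity)]
    calc Real.exp (-y*s) * s^(m+1) ≤ Real.exp (-(x/2)*s) * s^(m+1) := by
          have : -y*s ≤ -(x/2)*s := by nlinarith
          exact mul_le_mul_of_nonneg_right (Real.exp_le_exp.2 this) (by positivity)
      _ ≤ ((Nat.factorial (m+1) : ℝ) / (x/2)^(m+1) + 1) * min s 1 :=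
          exp_mul_pow_le (half_pos hx) hs' (by omega)
  · filter_upwards with s y _
    have h1 : HasDerivAt (fun y : ℝ => Real.exp (-y*s) * s^m)
        (Real.exp (-y*s) * (-1*s) * s^m) y :=
      (((hasDerivAt_id' y).fun_neg.mul_const s).exp).mul_const (s^m)
    exact h1.congr_deriv (by ring)

include hν in
lemma hasDerivAt_f {f : ℝ → ℝ}
    (hf : ∀ x : ℝ, 0 ≤ x → f x = ∫ s in Set.Ioi (0:ℝ), (1 - Real.exp (-x*s)) ∂ν)
    {x : ℝ} (hx : 0 < x) :
    HasDerivAt f (II ν 1 x) x := by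
  have h := hasDerivAt_integral_of_dominated_loc_of_deriv_le
    (μ := ν.restrict (Set.Ioi 0))
    (F := fun y s => 1 - Real.exp (-y*s))
    (F' := fun y s => Real.exp (-y*s) * s^1)
    (x₀ := x)
    (bound := fun s => ((Nat.factorial 1 : ℝ) / (x/2)^1 + 1) * min s 1)
    (ball_mem_nhds x (half_pos hx))
    (Eventually.of_forall fun y =>
      (continuous_const.sub
        (Real.continuous_exp.comp (continuous_const.mul continuous_id))).aestronglyMeasurable)
    (integrableOn_one_sub hν hx.le)
    ((((Real.continuous_exp.comp (continuous_const.mul continuous_id)).mul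
        (continuous_pow 1))).aestronglyMeasurable)
    ?_ (((integrable_min hν).const_mul _)) ?_
  · have h2 := h.2
    have heq : f =ᶠ[𝓝 x] fun y => ∫ s in Set.Ioi (0:ℝ), (1 - Real.exp (-y*s)) ∂ν := by
      filter_upwards [isOpen_Ioi.mem_nhds (show x ∈ Set.Ioi (0:ℝ) from hx)] with y hy
      exact hf y (le_of_lt hy)
    exact (h2.congr_of_eventuallyEq heq)
  · filter_upwards [ae_restrict_mem measurableSet_Ioi] with s hs y hy
    have hs' : (0:ℝ) < s := hs
    have hy' : x/2 < y := ball_bound hx hy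
    rw [Real.norm_eq_abs, abs_of_nonneg (by positivity)]
    calc Real.exp (-y*s) * s^1 ≤ Real.exp (-(x/2)*s) * s^1 := by
          have : -y*s ≤ -(x/2)*s := by nlinarith
          exact mul_le_mul_of_nonneg_right (Real.exp_le_exp.2 this) (by positivity)
      _ ≤ ((Nat.factorial 1 : ℝ) / (x/2)^1 + 1) * min s 1 :=
          exp_mul_pow_le (half_pos hx) hs' le_rfl
  · filter_upwards with s y _
    have h1 : HasDerivAt (fun y : ℝ => 1 - Real.exp (-y*s))
        (0 - Real.exp (-y*s) * (-1*s)) y :=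
      (hasDerivAt_const y 1).sub (((hasDerivAt_id' y).fun_neg.mul_const s).exp)
    exact h1.congr_deriv (by ring)

noncomputable def Fc (ν : Measure ℝ) (f : ℝ → ℝ) : ℕ → ℝ → ℝ
  | 0 => f
  | (m+1) => fun x => (-1:ℝ)^m * II ν (m+1) x

include hν in
lemma hasDerivAt_Fc {f : ℝ → ℝ}
    (hf : ∀ x : ℝ, 0 ≤ x → f x = ∫ s in Set.Ioi (0:ℝ), (1 - Real.exp (-x*s)) ∂ν)
    (m : ℕ) {x : ℝ} (hx : 0 < x) :
    HasDerivAt (Fc ν f m) (Fc ν f (m+1) x) x := by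
  cases m with
  | zero =>
      have := hasDerivAt_f hν hf hx
      simpa [Fc] using this
  | succ m =>
      have h := (hasDerivAt_II hν (m+1) (by omega) hx).const_mul ((-1:ℝ)^m)
      have : (-1:ℝ)^m * -(II ν (m+1+1) x) = (-1:ℝ)^(m+1) * II ν (m+2) x := by
        ring
      rw [this] at h
      exact h

include hν in
lemma contDiffOn_Fc {f : ℝ → ℝ}
    (hf : ∀ x : ℝ, 0 ≤ x → f x = ∫ s in Set.Ioi (0:ℝ), (1 - Real.exp (-x*s)) ∂ν)
    (n : ℕ) : ∀ m : ℕ, ContDiffOn ℝ n (Fc ν f m) (Set.Ioi 0) := by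
  induction n with
  | zero =>
      intro m
      rw [show ((0:ℕ):WithTop ℕ∞) = 0 from rfl, contDiffOn_zero]
      exact fun x hx => (hasDerivAt_Fc hν hf m hx).continuousAt.continuousWithinAt
  | succ n IH =>
      intro m
      rw [show (((n+1:ℕ)):WithTop ℕ∞) = (n:WithTop ℕ∞) + 1 by push_cast; ring]
      rw [contDiffOn_succ_iff_deriv_of_isOpen isOpen_Ioi]
      refine ⟨fun x hx => (hasDerivAt_Fc hν hf m hx).differentiableAt.differentiableWithinAt,
        ?_, ?_⟩
      · intro h; exact absurd h (by simp)
      · refine (IH (m+1)).congr fun x hx => ?_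
        exact (hasDerivAt_Fc hν hf m hx).deriv



lemma contDiffOn_iteratedDeriv {F : ℝ → ℝ} {U : Set ℝ} (hU : IsOpen U)
    (hF : ∀ n : ℕ, ContDiffOn ℝ n F U) :
    ∀ (j n : ℕ), ContDiffOn ℝ n (iteratedDeriv j F) U := by
  intro j
  induction j with
  | zero => simpa [iteratedDeriv_zero] using hF
  | succ j IH =>
      intro n
      rw [iteratedDeriv_succ]
      have h := IH (n+1)
      rw [show (((n+1:ℕ)):WithTop ℕ∞) = (n:WithTop ℕ∞) + 1 by push_cast; ring] at h
      rw [contDiffOn_succ_iff_deriv_of_isOpen hU] at h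
      exact h.2.2

lemma hasDerivAt_iteratedDeriv {F : ℝ → ℝ} {U : Set ℝ} (hU : IsOpen U)
    (hF : ∀ n : ℕ, ContDiffOn ℝ n F U) (j : ℕ) {x : ℝ} (hx : x ∈ U) :
    HasDerivAt (iteratedDeriv j F) (iteratedDeriv (j+1) F x) x := by
  rw [iteratedDeriv_succ]
  have h : DifferentiableAt ℝ (iteratedDeriv j F) x := by
    have h1 := contDiffOn_iteratedDeriv hU hF j 1
    rw [show ((1:ℕ):WithTop ℕ∞) = (0:WithTop ℕ∞) + 1 by norm_num,
      contDiffOn_succ_iff_deriv_of_isOpen hU] at h1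
    exact (h1.1 x hx).differentiableAt (hU.mem_nhds hx)
  exact h.hasDerivAt

lemma leibniz {F G : ℝ → ℝ} {U : Set ℝ} (hU : IsOpen U)
    (hF : ∀ n : ℕ, ContDiffOn ℝ n F U) (hG : ∀ n : ℕ, ContDiffOn ℝ n G U) :
    ∀ (n : ℕ) {x : ℝ}, x ∈ U → iteratedDeriv n (fun y => F y * G y) x
      = ∑ j ∈ Finset.range (n+1), (n.choose j : ℝ) *
          (iteratedDeriv j F x * iteratedDeriv (n-j) G x) := by
  intro n
  induction n with
  | zero => intro x _; simp [iteratedDeriv_zero]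
  | succ n IH =>
      intro x hx
      have hev : iteratedDeriv n (fun y => F y * G y) =ᶠ[𝓝 x]
          fun y => ∑ j ∈ Finset.range (n+1), (n.choose j : ℝ) *
            (iteratedDeriv j F y * iteratedDeriv (n-j) G y) := by
        filter_upwards [hU.mem_nhds hx] with y hy using IH hy
      rw [iteratedDeriv_succ, hev.deriv_eq]
      have hder : HasDerivAt (fun y => ∑ j ∈ Finset.range (n+1), (n.choose j : ℝ) *
            (iteratedDeriv j F y * iteratedDeriv (n-j) G y))
          (∑ j ∈ Finset.range (n+1), (n.choose j : ℝ) *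
            (iteratedDeriv (j+1) F x * iteratedDeriv (n-j) G x
              + iteratedDeriv j F x * iteratedDeriv (n-j+1) G x)) x := by
        refine HasDerivAt.fun_sum fun j _ => ?_
        exact ((hasDerivAt_iteratedDeriv hU hF j hx).mul
          (hasDerivAt_iteratedDeriv hU hG (n-j) hx)).const_mul _
      rw [hder.deriv]
      rw [Finset.sum_choose_succ_mul
        (fun i k => iteratedDeriv i F x * iteratedDeriv k G x) n]
      rw [← Finset.sum_add_distrib]
      refine Finset.sum_congr rfl fun j hj => ?_
      rw [Finset.mem_range] at hj
      have h1 : n + 1 - j = n - j + 1 := by omega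
      rw [h1]
      ring



lemma key_sum (k : ℕ) (t : ℝ) (b q : ℕ → ℝ)
    (hq : ∀ r : ℕ, 1 ≤ r → r ≤ k →
      q r = t / r * ∑ j ∈ Finset.range r, (((j:ℝ)+1) * b (j+1) * q (r-1-j))) :
    ∑ i ∈ Finset.range (k+1), b (i+1) * q (k-i)
      = 1/((k:ℝ)+1) * ∑ i ∈ Finset.range (k+1), (((i:ℝ)+1) * b (i+1) * q (k-i))
        + t/((k:ℝ)+1) * ∑ i ∈ Finset.range (k+1), (((i:ℝ)+1) * b (i+1) *
            ∑ l ∈ Finset.range (k-i), b (l+1) * q (k-i-1-l)) := by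
  classical
  set B : ℕ → ℕ → ℝ := fun i l => b (i+1) * b (l+1) * q (k-i-1-l) with hBdef
  have hB : ∀ i l : ℕ, B i l = B l i := by
    intro i l; simp only [hBdef]
    rw [show k-i-1-l = k-l-1-i from by omega]; ring
  set L : ℕ → ℕ → ℝ := fun i l => t/((k-i:ℕ):ℝ) * (((l:ℝ)+1) * B i l) with hLdef
  set M : ℕ → ℕ → ℝ := fun i l => ((i:ℝ)+1) * (t/((k-i:ℕ):ℝ) * (((l:ℝ)+1) * B i l)) with hMdef
  set N : ℕ → ℕ → ℝ := fun i l => ((i:ℝ)+1) * B i l with hNdef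
  have hKne : ((k:ℝ)+1) ≠ 0 := by positivity
  -- swap lemma
  have swap : ∀ g : ℕ → ℕ → ℝ,
      (∑ i ∈ Finset.range k, ∑ l ∈ Finset.range (k-i), g i l)
      = ∑ i ∈ Finset.range k, ∑ l ∈ Finset.range (k-i), g l i := fun g =>
    Finset.sum_comm' (fun x y => by simp only [Finset.mem_range]; omega)
  have addsplit : ∀ g h : ℕ → ℕ → ℝ,
      (∑ i ∈ Finset.range k, ∑ l ∈ Finset.range (k-i), (g i l + h i l))
      = (∑ i ∈ Finset.range k, ∑ l ∈ Finset.range (k-i), g i l)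
        + (∑ i ∈ Finset.range k, ∑ l ∈ Finset.range (k-i), h i l) := by
    intro g h
    rw [← Finset.sum_add_distrib]
    exact Finset.sum_congr rfl fun i _ => Finset.sum_add_distrib
  have constmul : ∀ (c : ℝ) (g : ℕ → ℕ → ℝ),
      (∑ i ∈ Finset.range k, ∑ l ∈ Finset.range (k-i), c * g i l)
      = c * ∑ i ∈ Finset.range k, ∑ l ∈ Finset.range (k-i), g i l := by
    intro c g
    rw [Finset.mul_sum]
    exact Finset.sum_congr rfl fun i _ => (Finset.mul_sum _ _ _).symm
  -- pointwise identity
  have ptid : ∀ i ∈ Finset.range k, ∀ l ∈ Finset.range (k-i),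
      L i l + L l i = 1/((k:ℝ)+1) * (M i l + M l i) + t/((k:ℝ)+1) * (N i l + N l i) := by
    intro i hi l hl
    rw [Finset.mem_range] at hi hl
    have hik : i + l + 1 ≤ k := by omega
    simp only [hLdef, hMdef, hNdef]
    rw [hB l i]
    rw [Nat.cast_sub (by omega : i ≤ k), Nat.cast_sub (by omega : l ≤ k)]
    have h1 : (i:ℝ) < k := by exact_mod_cast (by omega : i < k)
    have h2 : (l:ℝ) < k := by exact_mod_cast (by omega : l < k)
    have h3 : (k:ℝ) - i ≠ 0 := by linarith
    have h4 : (k:ℝ) - l ≠ 0 := by linarith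
    field_simp
    ring
  -- expansion of q (k-i)
  have hexp : ∀ i ∈ Finset.range k, q (k-i) = t/((k-i:ℕ):ℝ) *
      ∑ l ∈ Finset.range (k-i), (((l:ℝ)+1) * b (l+1) * q (k-i-1-l)) := by
    intro i hi; rw [Finset.mem_range] at hi
    exact hq (k-i) (by omega) (by omega)
  -- peel off the last term
  rw [Finset.sum_range_succ, Finset.sum_range_succ
      (f := fun i => ((i:ℝ)+1) * b (i+1) * q (k-i)),
    Finset.sum_range_succ
      (f := fun i => ((i:ℝ)+1) * b (i+1) * ∑ l ∈ Finset.range (k-i), b (l+1) * q (k-i-1-l))]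
  simp only [Nat.sub_self, Finset.range_zero, Finset.sum_empty, mul_zero, add_zero]
  have e1 : ∑ i ∈ Finset.range k, b (i+1) * q (k-i)
      = ∑ i ∈ Finset.range k, ∑ l ∈ Finset.range (k-i), L i l := by
    refine Finset.sum_congr rfl fun i hi => ?_
    rw [hexp i hi, hLdef]
    rw [Finset.mul_sum, Finset.mul_sum]
    refine Finset.sum_congr rfl fun l _ => ?_
    simp only [hBdef]; ring
  have e2 : ∑ i ∈ Finset.range k, (((i:ℝ)+1) * b (i+1) * q (k-i))
      = ∑ i ∈ Finset.range k, ∑ l ∈ Finset.range (k-i), M i l := by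
    refine Finset.sum_congr rfl fun i hi => ?_
    rw [hexp i hi, hMdef]
    rw [Finset.mul_sum, Finset.mul_sum]
    refine Finset.sum_congr rfl fun l _ => ?_
    simp only [hBdef]; ring
  have e3 : ∑ i ∈ Finset.range k, (((i:ℝ)+1) * b (i+1) *
        ∑ l ∈ Finset.range (k-i), b (l+1) * q (k-i-1-l))
      = ∑ i ∈ Finset.range k, ∑ l ∈ Finset.range (k-i), N i l := by
    refine Finset.sum_congr rfl fun i hi => ?_
    rw [hNdef, Finset.mul_sum]
    refine Finset.sum_congr rfl fun l _ => ?_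
    simp only [hBdef]; ring
  rw [e1, e2, e3]
  -- main doubled identity
  have main : (∑ i ∈ Finset.range k, ∑ l ∈ Finset.range (k-i), L i l)
      = 1/((k:ℝ)+1) * (∑ i ∈ Finset.range k, ∑ l ∈ Finset.range (k-i), M i l)
        + t/((k:ℝ)+1) * (∑ i ∈ Finset.range k, ∑ l ∈ Finset.range (k-i), N i l) := by
    have doubled :
        (∑ i ∈ Finset.range k, ∑ l ∈ Finset.range (k-i), L i l)
          + (∑ i ∈ Finset.range k, ∑ l ∈ Finset.range (k-i), L i l)
        = (1/((k:ℝ)+1) * (∑ i ∈ Finset.range k, ∑ l ∈ Finset.range (k-i), M i l)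
            + t/((k:ℝ)+1) * (∑ i ∈ Finset.range k, ∑ l ∈ Finset.range (k-i), N i l))
          + (1/((k:ℝ)+1) * (∑ i ∈ Finset.range k, ∑ l ∈ Finset.range (k-i), M i l)
            + t/((k:ℝ)+1) * (∑ i ∈ Finset.range k, ∑ l ∈ Finset.range (k-i), N i l)) := by
      conv_lhs => rw [show (∑ i ∈ Finset.range k, ∑ l ∈ Finset.range (k-i), L i l)
          + (∑ i ∈ Finset.range k, ∑ l ∈ Finset.range (k-i), L i l)
        = (∑ i ∈ Finset.range k, ∑ l ∈ Finset.range (k-i), L i l)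
          + (∑ i ∈ Finset.range k, ∑ l ∈ Finset.range (k-i), L l i) from by rw [← swap L]]
      rw [← addsplit]
      have : (∑ i ∈ Finset.range k, ∑ l ∈ Finset.range (k-i), (L i l + L l i))
          = ∑ i ∈ Finset.range k, ∑ l ∈ Finset.range (k-i),
              (1/((k:ℝ)+1) * (M i l + M l i) + t/((k:ℝ)+1) * (N i l + N l i)) := by
        refine Finset.sum_congr rfl fun i hi => Finset.sum_congr rfl fun l hl => ?_
        exact ptid i hi l hl
      rw [this, addsplit, constmul, constmul, addsplit, addsplit, ← swap M, ← swap N]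
      ring
    linarith
  rw [main]
  field_simp
  ring






section

variable (hν : ∫⁻ s in Set.Ioi (0:ℝ), ENNReal.ofReal (min s 1) ∂ν < ⊤)
  (hf : ∀ x : ℝ, 0 ≤ x → f x = ∫ s in Set.Ioi (0:ℝ), (1 - Real.exp (-x*s)) ∂ν)
  (hlam : 0 < lam)

include hν hf hlam

lemma mapsTo_mul : Set.MapsTo (fun u : ℝ => lam * u) (Set.Ioi 0) (Set.Ioi 0) :=
  fun u hu => mul_pos hlam hu

lemma contDiffOn_Fc_comp (n : ℕ) (c : ℝ) (m : ℕ) :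
    ContDiffOn ℝ n (fun u => c * Fc ν f m (lam * u)) (Set.Ioi 0) := by
  refine contDiffOn_const.mul ?_
  have h := (contDiffOn_Fc hν hf n m).comp
    ((contDiff_const.mul contDiff_id).contDiffOn) (mapsTo_mul hν hf hlam)
  simpa [Function.comp_def] using h

lemma hphi_smooth (t : ℝ) (n : ℕ) :
    ContDiffOn ℝ n (fun u => Real.exp (-t * f (lam * u))) (Set.Ioi 0) := by
  have h1 : ContDiffOn ℝ n (fun u => -t * f (lam * u)) (Set.Ioi 0) := by
    have := contDiffOn_Fc_comp hν hf hlam n (-t) 0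
    simpa [Fc] using this
  have := Real.contDiff_exp.comp_contDiffOn h1
  simpa [Function.comp_def] using this

lemma iterD (c : ℝ) (m : ℕ) : ∀ (j : ℕ) {u : ℝ}, u ∈ Set.Ioi (0:ℝ) →
    iteratedDeriv j (fun u => c * Fc ν f m (lam * u)) u
      = c * lam^j * Fc ν f (m+j) (lam * u) := by
  intro j
  induction j with
  | zero =>
      intro u _
      rw [iteratedDeriv_zero]
      norm_num
  | succ j IH =>
      intro u hu
      rw [iteratedDeriv_succ]
      have hev : iteratedDeriv j (fun u => c * Fc ν f m (lam * u)) =ᶠ[𝓝 u]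
          fun v => c * lam^j * Fc ν f (m+j) (lam * v) := by
        filter_upwards [isOpen_Ioi.mem_nhds hu] with v hv using IH hv
      rw [hev.deriv_eq]
      have h1 : HasDerivAt (fun y : ℝ => lam * y) lam u := by
        simpa using (hasDerivAt_id u).const_mul lam
      have h2 : HasDerivAt (fun y : ℝ => Fc ν f (m+j) (lam * y))
          (Fc ν f (m+j+1) (lam*u) * lam) u := by
        have := (hasDerivAt_Fc hν hf (m+j) (mul_pos hlam hu)).comp u h1
        simpa [Function.comp_def] using this
      have h3 := h2.const_mul (c * lam^j)
      rw [h3.deriv]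
      show c * lam^j * (Fc ν f (m+j+1) (lam*u) * lam) = c * lam^(j+1) * Fc ν f (m+j+1) (lam*u)
      ring

lemma hderiv_phi (t : ℝ) : ∀ u ∈ Set.Ioi (0:ℝ),
    deriv (fun u => Real.exp (-t * f (lam * u))) u
      = ((-t*lam) * Fc ν f 1 (lam*u)) * Real.exp (-t * f (lam * u)) := by
  intro u hu
  have h1 : HasDerivAt (fun y : ℝ => lam * y) lam u := by
    simpa using (hasDerivAt_id u).const_mul lam
  have h2 : HasDerivAt (fun y : ℝ => f (lam * y)) (Fc ν f 1 (lam*u) * lam) u := by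
    have := (hasDerivAt_Fc hν hf 0 (mul_pos hlam hu)).comp u h1
    simpa [Function.comp_def, Fc] using this
  have h3 : HasDerivAt (fun y : ℝ => -t * f (lam * y)) (-t * (Fc ν f 1 (lam*u) * lam)) u :=
    h2.const_mul (-t)
  have h4 := h3.exp
  rw [h4.deriv]
  ring

lemma Drec (k : ℕ) (t : ℝ) :
    iteratedDeriv (k+1) (fun u => Real.exp (-t * f (lam * u))) 1
      = ∑ j ∈ Finset.range (k+1), (k.choose j : ℝ) *
          (((-t*lam) * lam^j * Fc ν f (1+j) lam) *
            iteratedDeriv (k-j) (fun u => Real.exp (-t * f (lam * u))) 1) := by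
  have h1mem : (1:ℝ) ∈ Set.Ioi (0:ℝ) := by norm_num
  rw [iteratedDeriv_succ']
  have hev : Set.EqOn (deriv (fun u => Real.exp (-t * f (lam * u))))
      (fun u => ((-t*lam) * Fc ν f 1 (lam*u)) * Real.exp (-t * f (lam * u)))
      (Set.Ioi 0) := fun u hu => hderiv_phi hν hf hlam t u hu
  rw [hev.iteratedDeriv_of_isOpen isOpen_Ioi k h1mem]
  rw [leibniz isOpen_Ioi (fun n => contDiffOn_Fc_comp hν hf hlam n (-t*lam) 1)
    (hphi_smooth hν hf hlam t) k h1mem]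
  refine Finset.sum_congr rfl fun j hj => ?_
  rw [iterD hν hf hlam (-t*lam) 1 j h1mem, mul_one]

end






section
variable (hν : ∫⁻ s in Set.Ioi (0:ℝ), ENNReal.ofReal (min s 1) ∂ν < ⊤)
  (hf : ∀ x : ℝ, 0 ≤ x → f x = ∫ s in Set.Ioi (0:ℝ), (1 - Real.exp (-x*s)) ∂ν)
  (hlam : 0 < lam)
  {p : ℕ → ℝ → ℝ}
  (hp : ∀ k : ℕ, ∀ t : ℝ,
      p k t = (-1 : ℝ) ^ k / (Nat.factorial k) *
        iteratedDeriv k (fun u => Real.exp (-t * f (lam * u))) 1)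

include hp in
lemma hDp (n : ℕ) (t : ℝ) :
    iteratedDeriv n (fun u => Real.exp (-t * f (lam * u))) 1
      = (-1:ℝ)^n * (Nat.factorial n : ℝ) * p n t := by
  rw [hp n t]
  have hfz : ((Nat.factorial n : ℕ):ℝ) ≠ 0 := Nat.cast_ne_zero.mpr n.factorial_ne_zero
  rcases Nat.even_or_odd n with h | h
  · rw [h.neg_one_pow]; field_simp
  · rw [h.neg_one_pow]; field_simp

include hν hf hlam hp in
lemma R1 (k : ℕ) (t : ℝ) :
    p (k+1) t = t/((k:ℝ)+1) * ∑ j ∈ Finset.range (k+1),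
      (((j:ℝ)+1) * (lam^(j+1)/(Nat.factorial (j+1) : ℝ) * II ν (j+1) lam) * p (k-j) t) := by
  rw [hp (k+1) t, Drec hν hf hlam k t, Finset.mul_sum, Finset.mul_sum]
  refine Finset.sum_congr rfl fun j hj => ?_
  rw [Finset.mem_range] at hj
  obtain ⟨r, rfl⟩ : ∃ r, k = j + r := ⟨k - j, by omega⟩
  have hkj : j + r - j = r := by omega
  rw [hkj, hDp hp r t]
  have hFc : Fc ν f (1+j) lam = (-1:ℝ)^j * II ν (j+1) lam := by
    rw [Nat.add_comm 1 j]; rfl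
  rw [hFc]
  have hC : ((j+r).choose j : ℝ) = ((j+r).factorial : ℝ) /
      ((Nat.factorial r : ℝ) * (Nat.factorial j : ℝ)) := by
    have h := Nat.add_choose_mul_factorial_mul_factorial r j
    rw [Nat.add_comm r j] at h
    have h' : (((j+r).choose j : ℕ):ℝ) * (Nat.factorial r : ℝ) * (Nat.factorial j : ℝ)
        = ((j+r).factorial : ℝ) := by exact_mod_cast h
    field_simp [Nat.factorial_ne_zero]
    linarith [h']
  have hfs : (((j+r+1).factorial : ℕ):ℝ) = (((j:ℝ)+(r:ℝ)) + 1) * ((j+r).factorial : ℝ) := by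
    rw [Nat.factorial_succ]; push_cast; ring
  have hfj : ((Nat.factorial (j+1) : ℕ):ℝ) = ((j:ℝ)+1) * (Nat.factorial j : ℝ) := by
    rw [Nat.factorial_succ]; push_cast; ring
  have hsgn : (-1:ℝ)^(j+r+1) = (-1:ℝ)^j * (-1:ℝ)^r * (-1) := by
    rw [pow_succ, pow_add]
  rw [hC, hfs, hfj, hsgn]
  have hz1 : ((j+r).factorial : ℝ) ≠ 0 := Nat.cast_ne_zero.mpr (Nat.factorial_ne_zero _)
  have hz2 : (Nat.factorial r : ℝ) ≠ 0 := Nat.cast_ne_zero.mpr (Nat.factorial_ne_zero _)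
  have hz3 : (Nat.factorial j : ℝ) ≠ 0 := Nat.cast_ne_zero.mpr (Nat.factorial_ne_zero _)
  have hz4 : ((j:ℝ)+(r:ℝ)+1) ≠ 0 := by positivity
  have hz5 : ((j:ℝ)+1) ≠ 0 := by positivity
  push_cast
  rcases Nat.even_or_odd j with hj' | hj' <;> rcases Nat.even_or_odd r with hr' | hr' <;>
    rw [hj'.neg_one_pow, hr'.neg_one_pow] <;> field_simp <;> ring

end





section
variable (hν : ∫⁻ s in Set.Ioi (0:ℝ), ENNReal.ofReal (min s 1) ∂ν < ⊤)
  (hf : ∀ x : ℝ, 0 ≤ x → f x = ∫ s in Set.Ioi (0:ℝ), (1 - Real.exp (-x*s)) ∂ν)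
  (hlam : 0 < lam)
  {p : ℕ → ℝ → ℝ}
  (hp : ∀ k : ℕ, ∀ t : ℝ,
      p k t = (-1 : ℝ) ^ k / (Nat.factorial k) *
        iteratedDeriv k (fun u => Real.exp (-t * f (lam * u))) 1)

include hν hf hlam hp in
lemma main : ∀ (k : ℕ) (t : ℝ),
    HasDerivAt (p k)
      (-f lam * p k t + ∑ m ∈ Finset.Icc 1 k,
        lam^m / (Nat.factorial m : ℝ) * p (k-m) t * II ν m lam) t := by
  intro k
  induction k using Nat.strong_induction_on with
  | _ k IH =>
    match k with
    | 0 =>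
      intro t
      have hp0 : p 0 = fun τ => Real.exp (-τ * f lam) := by
        funext τ
        rw [hp 0 τ]
        simp
      rw [hp0]
      have h := ((hasDerivAt_id' t).fun_neg.mul_const (f lam)).exp
      convert h using 1
      rw [Finset.Icc_eq_empty (by norm_num)]
      simp
      ring
    | (k+1) =>
      intro t
      set bb : ℕ → ℝ := fun m => lam^m / (Nat.factorial m : ℝ) * II ν m lam with hbb
      have R1' : ∀ (n : ℕ) (τ : ℝ), p (n+1) τ = τ/((n:ℝ)+1) *
          ∑ j ∈ Finset.range (n+1), (((j:ℝ)+1) * bb (j+1) * p (n-j) τ) := by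
        intro n τ
        rw [R1 hν hf hlam hp n τ]
      have hS : HasDerivAt
          (fun τ => ∑ j ∈ Finset.range (k+1), (((j:ℝ)+1) * bb (j+1) * p (k-j) τ))
          (∑ j ∈ Finset.range (k+1), (((j:ℝ)+1) * bb (j+1) *
            (-f lam * p (k-j) t + ∑ m ∈ Finset.Icc 1 (k-j),
              lam^m / (Nat.factorial m : ℝ) * p (k-j-m) t * II ν m lam))) t := by
        refine HasDerivAt.fun_sum fun j hj => ?_
        exact (IH (k-j) (by omega) t).const_mul _
      have hP := ((hasDerivAt_id' t).div_const ((k:ℝ)+1)).mul hS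
      have hPc : HasDerivAt (p (k+1))
          (1/((k:ℝ)+1) * ∑ j ∈ Finset.range (k+1), (((j:ℝ)+1) * bb (j+1) * p (k-j) t)
            + t/((k:ℝ)+1) * ∑ j ∈ Finset.range (k+1), (((j:ℝ)+1) * bb (j+1) *
              (-f lam * p (k-j) t + ∑ m ∈ Finset.Icc 1 (k-j),
                lam^m / (Nat.factorial m : ℝ) * p (k-j-m) t * II ν m lam))) t := by
        have heq : p (k+1) =ᶠ[𝓝 t] fun τ => τ/((k:ℝ)+1) *
            ∑ j ∈ Finset.range (k+1), (((j:ℝ)+1) * bb (j+1) * p (k-j) τ) :=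
          Eventually.of_forall fun τ => R1' k τ
        have := hP.congr_of_eventuallyEq heq
        convert this using 1
      convert hPc using 1
      -- value identity
      have split : ∑ j ∈ Finset.range (k+1), (((j:ℝ)+1) * bb (j+1) *
            (-f lam * p (k-j) t + ∑ m ∈ Finset.Icc 1 (k-j),
              lam^m / (Nat.factorial m : ℝ) * p (k-j-m) t * II ν m lam))
          = -f lam * ∑ j ∈ Finset.range (k+1), (((j:ℝ)+1) * bb (j+1) * p (k-j) t)
            + ∑ j ∈ Finset.range (k+1), (((j:ℝ)+1) * bb (j+1) *
              ∑ m ∈ Finset.Icc 1 (k-j),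
                lam^m / (Nat.factorial m : ℝ) * p (k-j-m) t * II ν m lam) := by
        rw [Finset.mul_sum, ← Finset.sum_add_distrib]
        refine Finset.sum_congr rfl fun j _ => by ring
      rw [split, mul_add]
      have hfl : t/((k:ℝ)+1) * (-f lam *
          ∑ j ∈ Finset.range (k+1), (((j:ℝ)+1) * bb (j+1) * p (k-j) t))
          = -f lam * p (k+1) t := by
        rw [R1' k t]; ring
      rw [hfl]
      have hq' : ∀ r : ℕ, 1 ≤ r → r ≤ k → p r t = t/(r:ℝ) *
          ∑ j ∈ Finset.range r, (((j:ℝ)+1) * bb (j+1) * p (r-1-j) t) := by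
        intro r h1 _
        obtain ⟨r', rfl⟩ : ∃ r', r = r'+1 := ⟨r-1, by omega⟩
        rw [R1' r' t]
        have hc : ((r'+1:ℕ):ℝ) = (r':ℝ)+1 := by push_cast; ring
        rw [hc]
        refine congrArg _ (Finset.sum_congr rfl fun j _ => ?_)
        have : r'+1-1-j = r'-j := by omega
        rw [this]
      have KS := key_sum k t bb (fun r => p r t) (by
        intro r hr1 hr2
        simpa using hq' r hr1 hr2)
      have convL : ∑ m ∈ Finset.Icc 1 (k+1),
            lam^m / (Nat.factorial m : ℝ) * p (k+1-m) t * II ν m lam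
          = ∑ i ∈ Finset.range (k+1), bb (i+1) * p (k-i) t := by
        rw [← Finset.Ico_add_one_right_eq_Icc, Finset.sum_Ico_eq_sum_range]
        refine Finset.sum_congr (by norm_num) fun i hi => ?_
        have h1 : 1 + i = i + 1 := by omega
        rw [h1]
        have h2 : k+1-(i+1) = k-i := by omega
        rw [h2]
        simp only [hbb]
        ring
      have convW : ∀ j ∈ Finset.range (k+1),
          (∑ m ∈ Finset.Icc 1 (k-j),
            lam^m / (Nat.factorial m : ℝ) * p (k-j-m) t * II ν m lam)
          = ∑ l ∈ Finset.range (k-j), bb (l+1) * p (k-j-1-l) t := by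
        intro j _
        rw [← Finset.Ico_add_one_right_eq_Icc, Finset.sum_Ico_eq_sum_range]
        refine Finset.sum_congr (by norm_num) fun l hl => ?_
        have h1 : 1 + l = l + 1 := by omega
        rw [h1]
        have h2 : k-j-(l+1) = k-j-1-l := by omega
        rw [h2]
        simp only [hbb]
        ring
      have hW : ∑ j ∈ Finset.range (k+1), (((j:ℝ)+1) * bb (j+1) *
            ∑ m ∈ Finset.Icc 1 (k-j),
              lam^m / (Nat.factorial m : ℝ) * p (k-j-m) t * II ν m lam)
          = ∑ j ∈ Finset.range (k+1), (((j:ℝ)+1) * bb (j+1) *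
            ∑ l ∈ Finset.range (k-j), bb (l+1) * p (k-j-1-l) t) :=
        Finset.sum_congr rfl fun j hj => by rw [convW j hj]
      rw [convL, hW]
      linarith [KS]

end


end SPE

open MeasureTheory

/-- The state probabilities `p k t = ((-1)^k/k!) dᵏ/duᵏ e^{-t f(λ u)} |_{u=1}` of the
subordinated Poisson process solve
`d/dt p k t = -f(λ) p k t + Σ_{m=1}^k (λ^m/m!) p (k-m) t ∫_0^∞ e^{-λ s} s^m ν(ds)`. -/
theorem state_probabilities_equation
    (lam : ℝ) (hlam : 0 < lam) (ν : Measure ℝ)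
    (hν : ∫⁻ s in Set.Ioi (0:ℝ), ENNReal.ofReal (min s 1) ∂ν < ⊤)
    (hint : ∀ m : ℕ, 1 ≤ m →
      IntegrableOn (fun s => Real.exp (-lam * s) * s ^ m) (Set.Ioi 0) ν)
    (f : ℝ → ℝ)
    (hf : ∀ x : ℝ, 0 ≤ x → f x = ∫ s in Set.Ioi (0:ℝ), (1 - Real.exp (-x * s)) ∂ν)
    (p : ℕ → ℝ → ℝ)
    (hp : ∀ k : ℕ, ∀ t : ℝ,
      p k t = (-1 : ℝ) ^ k / (Nat.factorial k) *
        iteratedDeriv k (fun u => Real.exp (-t * f (lam * u))) 1) :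
    ∀ (k : ℕ) (t : ℝ), 0 < t →
      HasDerivAt (fun τ => p k τ)
        (-f lam * p k t +
          ∑ m ∈ Finset.Icc 1 k, lam ^ m / (Nat.factorial m) * p (k - m) t *
            ∫ s in Set.Ioi (0:ℝ), Real.exp (-lam * s) * s ^ m ∂ν) t := by
  intro k t ht
  have h := SPE.main hν hf hlam hp k t
  simpa only [SPE.II] using h
end

section
/- Let N^f(t) = N(H^f(t)) be a Poisson process of rate λ subordinated by an independent subordinator with Laplace exponent f. Then P(N^f(t) = k) = ((-1)^k/k!) (d^k/du^k) e^{-t f(λ u)} evaluated at u = 1, for every integer k ≥ 0. -/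
open MeasureTheory

lemma pow_le_factorial_mul_exp (x : ℝ) (hx : 0 ≤ x) (k : ℕ) :
    x ^ k ≤ (Nat.factorial k) * Real.exp x := by
  have h1 : x ^ k / (Nat.factorial k) ≤ Real.exp x := by
    calc x ^ k / (Nat.factorial k)
        ≤ ∑ i ∈ Finset.range (k+1), x ^ i / (Nat.factorial i) := by
          apply Finset.single_le_sum (f := fun i => x ^ i / (Nat.factorial i))
          · intro i _; positivity
          · simp
      _ ≤ Real.exp x := Real.sum_le_exp_of_nonneg hx _
  have hk : (0:ℝ) < (Nat.factorial k) := by positivity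
  rw [div_le_iff₀ hk] at h1
  linarith [h1]

-- main bound: for s ≥ 0, u ≥ c > 0: (lam*s)^k * exp(-(lam*u*s)) ≤ k! / c^k
lemma key_bound (lam c u s : ℝ) (hlam : 0 < lam) (hc : 0 < c) (hcu : c ≤ u)
    (hs : 0 ≤ s) (k : ℕ) :
    (lam * s) ^ k * Real.exp (-(lam * u * s)) ≤ (Nat.factorial k) / c ^ k := by
  have h0 : 0 ≤ lam * s := by positivity
  have h1 : (lam * c * s) ^ k ≤ (Nat.factorial k) * Real.exp (lam * c * s) :=
    pow_le_factorial_mul_exp _ (by positivity) k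
  have h2 : Real.exp (-(lam * u * s)) ≤ Real.exp (-(lam * c * s)) := by
    apply Real.exp_le_exp.2; nlinarith
  have h3 : (lam * s) ^ k * Real.exp (-(lam * c * s)) ≤ (Nat.factorial k) / c ^ k := by
    rw [le_div_iff₀ (by positivity : (0:ℝ) < c ^ k)]
    have h4 := mul_le_mul_of_nonneg_right h1 (Real.exp_pos (-(lam * c * s))).le
    calc (lam * s) ^ k * Real.exp (-(lam * c * s)) * c ^ k
        = (lam * c * s) ^ k * Real.exp (-(lam * c * s)) := by
          rw [show (lam * c * s) ^ k = (lam * s) ^ k * c ^ k by rw [← mul_pow]; ring_nf]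
          ring
      _ ≤ (Nat.factorial k) * Real.exp (lam * c * s) * Real.exp (-(lam * c * s)) := h4
      _ = (Nat.factorial k) := by rw [mul_assoc, ← Real.exp_add]; simp
  calc (lam * s) ^ k * Real.exp (-(lam * u * s))
      ≤ (lam * s) ^ k * Real.exp (-(lam * c * s)) := by
        apply mul_le_mul_of_nonneg_left h2 (by positivity)
    _ ≤ _ := h3

/-- If `μt` is the law of `H^f(t)` with Laplace transform `e^{-t f(·)}`, then
`P(N(H^f(t)) = k) = ∫ e^{-λs}(λs)^k/k! μt(ds) = ((-1)^k/k!) dᵏ/duᵏ e^{-t f(λ u)} |_{u=1}`. -/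
theorem distribution_subordinated_poisson
    (lam t : ℝ) (hlam : 0 < lam) (ht : 0 < t)
    (f : ℝ → ℝ) (μt : Measure ℝ) [IsProbabilityMeasure μt]
    (hsupp : μt (Set.Iio 0) = 0)
    (hlaplace : ∀ x : ℝ, 0 ≤ x → ∫ s, Real.exp (-x * s) ∂μt = Real.exp (-t * f x)) :
    ∀ k : ℕ,
      ∫ s, Real.exp (-lam * s) * (lam * s) ^ k / (Nat.factorial k) ∂μt
        = (-1 : ℝ) ^ k / (Nat.factorial k) *
            iteratedDeriv k (fun u => Real.exp (-t * f (lam * u))) 1 := by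
  have hae : ∀ᵐ s ∂μt, 0 ≤ s := by
    rw [MeasureTheory.ae_iff]
    convert hsupp using 2
    ext s; simp [Set.Iio, not_le]
  set G : ℕ → ℝ → ℝ := fun k u => ∫ s, (-(lam * s)) ^ k * Real.exp (-(lam * u * s)) ∂μt with hG
  -- measurability
  have hmeas : ∀ (k : ℕ) (u : ℝ),
      AEStronglyMeasurable (fun s => (-(lam * s)) ^ k * Real.exp (-(lam * u * s))) μt := by
    intro k u
    apply Continuous.aestronglyMeasurable
    continuity
  -- integrability
  have hint : ∀ (k : ℕ) (u : ℝ), 0 < u →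
      Integrable (fun s => (-(lam * s)) ^ k * Real.exp (-(lam * u * s))) μt := by
    intro k u hu
    apply Integrable.mono' (integrable_const ((Nat.factorial k : ℝ) / u ^ k)) (hmeas k u)
    filter_upwards [hae] with s hs
    rw [Real.norm_eq_abs, abs_mul, abs_pow, abs_neg, Real.abs_exp,
      abs_of_nonneg (by positivity : (0:ℝ) ≤ lam * s)]
    exact key_bound lam u u s hlam hu le_rfl hs k
  -- derivative step
  have hderiv : ∀ (k : ℕ) (u : ℝ), 0 < u → HasDerivAt (G k) (G (k+1) u) u := by
    intro k u hu
    have hball : ∀ x ∈ Metric.ball u (u/2), u/2 ≤ x := by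
      intro x hx
      rw [Metric.mem_ball, Real.dist_eq, abs_lt] at hx
      linarith
    have := hasDerivAt_integral_of_dominated_loc_of_deriv_le
      (F := fun u s => (-(lam * s)) ^ k * Real.exp (-(lam * u * s)))
      (F' := fun u s => (-(lam * s)) ^ (k+1) * Real.exp (-(lam * u * s)))
      (x₀ := u) (μ := μt)
      (bound := fun _ => (Nat.factorial (k+1) : ℝ) / (u/2) ^ (k+1))
      (Metric.ball_mem_nhds u (half_pos hu))
      (Filter.Eventually.of_forall fun x => hmeas k x)
      (hint k u hu)
      (hmeas (k+1) u)
      ?_ (integrable_const _) ?_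
    · exact this.2
    · filter_upwards [hae] with s hs x hx
      rw [Real.norm_eq_abs, abs_mul, abs_pow, abs_neg, Real.abs_exp,
        abs_of_nonneg (by positivity : (0:ℝ) ≤ lam * s)]
      exact key_bound lam (u/2) x s hlam (half_pos hu) (hball x hx) hs (k+1)
    · filter_upwards [hae] with s _ x _
      have h1 : HasDerivAt (fun y : ℝ => -(lam * y * s)) (-(lam * s)) x := by
        have : HasDerivAt (fun y : ℝ => y) 1 x := hasDerivAt_id x
        exact ((this.const_mul lam).mul_const s).neg.congr_deriv (by ring)
      have h2 : HasDerivAt (fun y : ℝ => Real.exp (-(lam * y * s)))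
          (Real.exp (-(lam * x * s)) * (-(lam * s))) x := h1.exp
      have := h2.const_mul ((-(lam * s)) ^ k)
      exact this.congr_deriv (by ring)
  -- iterated derivatives of F := G 0
  have hiter : ∀ (k : ℕ) (u : ℝ), 0 < u → iteratedDeriv k (G 0) u = G k u := by
    intro k
    induction k with
    | zero => intro u _; simp
    | succ k ih =>
      intro u hu
      rw [iteratedDeriv_succ]
      have hev : iteratedDeriv k (G 0) =ᶠ[nhds u] G k := by
        filter_upwards [Ioi_mem_nhds hu] with x hx
        exact ih x hx
      rw [hev.deriv_eq]
      exact (hderiv k u hu).deriv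
  -- G 0 agrees with the target function near 1
  have hfg : (fun u => Real.exp (-t * f (lam * u))) =ᶠ[nhds (1:ℝ)] G 0 := by
    filter_upwards [Ioi_mem_nhds (zero_lt_one : (0:ℝ) < 1)] with u hu
    have := hlaplace (lam * u) (mul_nonneg hlam.le (le_of_lt hu))
    simp only [hG]
    rw [← this]
    congr 1
    ext s
    simp [mul_assoc]
  intro k
  rw [hfg.iteratedDeriv_eq k, hiter k 1 zero_lt_one]
  have : G k 1 = ∫ s, (-1:ℝ)^k * (Real.exp (-lam * s) * (lam * s) ^ k) ∂μt := by
    simp only [hG]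
    congr 1
    ext s
    rw [neg_pow]
    ring_nf
  rw [this, integral_const_mul]
  rw [integral_div]
  field_simp
  ring_nf
  rw [mul_comm k 2, pow_mul, neg_one_sq, one_pow, mul_one]
end

section
/- The probability generating function of the sequence of first-passage time densities satisfies Σ_{k=1}^∞ u^k q_k^f(s) = (u/(1-u)) f(λ(1-u)) e^{-s f(λ(1-u))} for |u| < 1 and s > 0, where q_k^f(s) = (d/ds) ∫_0^∞ P(N(z) ≥ k) P(H^f(s) ∈ dz). -/
open MeasureTheory Filter Topology

section FPGFHelpers

lemma fpgf_superadd_iter {g : ℝ → ℝ} (h0 : ∀ x, 0 < x → 0 ≤ g x)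
    (hadd : ∀ x y, 0 < x → 0 < y → g x + g y ≤ g (x + y)) :
    ∀ n : ℕ, 1 ≤ n → ∀ τ T : ℝ, 0 < τ → (n : ℝ) * τ ≤ T → (n : ℝ) * g τ ≤ g T := by
  intro n hn
  induction n, hn using Nat.le_induction with
  | base =>
    intro τ T hτ hle
    push_cast
    push_cast at hle
    rcases eq_or_lt_of_le (by linarith : τ ≤ T) with h | h
    · simp [← h]
    · have := hadd τ (T - τ) hτ (by linarith)
      have := h0 (T - τ) (by linarith)
      simp only [add_sub_cancel] at *
      linarith
  | succ n hn ih =>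
    intro τ T hτ hle
    push_cast at hle ⊢
    have hT : (n : ℝ) * τ ≤ T - τ := by linarith
    have h1 := ih τ (T - τ) hτ hT
    have hTτ : 0 < T - τ := by
      have : (0:ℝ) < (n:ℝ) * τ := by positivity
      linarith
    have := hadd (T - τ) τ hTτ hτ
    simp only [sub_add_cancel] at this
    linarith

lemma fpgf_superadd_bound {g : ℝ → ℝ} (h0 : ∀ x, 0 < x → 0 ≤ g x)
    (hadd : ∀ x y, 0 < x → 0 < y → g x + g y ≤ g (x + y)) {τ T : ℝ}
    (hτ : 0 < τ) (hτT : τ < T) : g τ / τ ≤ g T / (T - τ) := by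
  set n := ⌊T / τ⌋₊ with hn
  have hT : 0 < T := lt_trans hτ hτT
  have hdiv : 1 ≤ T / τ := (one_le_div hτ).2 hτT.le
  have hn1 : 1 ≤ n := Nat.le_floor (by exact_mod_cast hdiv)
  have hle : (n : ℝ) * τ ≤ T := by
    have := Nat.floor_le (le_trans zero_le_one hdiv)
    calc (n:ℝ) * τ ≤ (T / τ) * τ := by
          apply mul_le_mul_of_nonneg_right _ hτ.le
          exact_mod_cast this
      _ = T := div_mul_cancel₀ _ hτ.ne'
  have hiter := fpgf_superadd_iter h0 hadd n hn1 τ T hτ hle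
  have hlow : T - τ ≤ (n : ℝ) * τ := by
    have h2 : T / τ < (n : ℝ) + 1 := by
      have := Nat.lt_floor_add_one (T / τ)
      exact_mod_cast this
    have : T < ((n:ℝ) + 1) * τ := by
      calc T = (T / τ) * τ := (div_mul_cancel₀ _ hτ.ne').symm
        _ < ((n:ℝ)+1) * τ := by
          exact mul_lt_mul_of_pos_right h2 hτ
    linarith
  have hnτ : 0 < (n:ℝ) * τ := by positivity
  have h1 : g τ / τ ≤ g T / ((n:ℝ) * τ) := by
    rw [div_le_div_iff₀ hτ hnτ]
    calc g τ * ((n:ℝ) * τ) = ((n:ℝ) * g τ) * τ := by ring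
      _ ≤ g T * τ := mul_le_mul_of_nonneg_right hiter hτ.le
  refine h1.trans ?_
  apply div_le_div_of_nonneg_left (h0 T hT) (by linarith) hlow

lemma fpgf_superadd_tendsto {g : ℝ → ℝ} (h0 : ∀ x, 0 < x → 0 ≤ g x)
    (hadd : ∀ x y, 0 < x → 0 < y → g x + g y ≤ g (x + y)) :
    ∃ b : ℝ, 0 ≤ b ∧ (∀ T, 0 < T → b ≤ g T / T) ∧
      Tendsto (fun τ => g τ / τ) (𝓝[>] (0:ℝ)) (𝓝 b) := by
  set S := (fun T => g T / T) '' Set.Ioi 0 with hS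
  have hne : S.Nonempty := ⟨g 1 / 1, ⟨1, by norm_num, rfl⟩⟩
  have hmem : ∀ y ∈ S, 0 ≤ y := by
    rintro y ⟨T, hT, rfl⟩
    exact div_nonneg (h0 T hT) (le_of_lt hT)
  have hbdd : BddBelow S := ⟨0, fun y hy => hmem y hy⟩
  refine ⟨sInf S, le_csInf hne hmem, fun T hT => csInf_le hbdd ⟨T, hT, rfl⟩, ?_⟩
  rw [tendsto_order]
  constructor
  · intro x hx
    filter_upwards [self_mem_nhdsWithin] with τ hτ
    exact lt_of_lt_of_le hx (csInf_le hbdd ⟨τ, hτ, rfl⟩)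
  · intro x hx
    obtain ⟨y, ⟨T, hT, rfl⟩, hy⟩ := exists_lt_of_csInf_lt hne hx
    have hT' : (0:ℝ) < T := hT
    have hcont : Tendsto (fun τ : ℝ => g T / (T - τ)) (𝓝[>] (0:ℝ)) (𝓝 (g T / T)) := by
      apply Tendsto.mono_left _ nhdsWithin_le_nhds
      have : Tendsto (fun τ : ℝ => T - τ) (𝓝 0) (𝓝 T) := by
        simpa using (tendsto_const_nhds (x := T)).sub (continuous_id.tendsto 0)
      exact (tendsto_const_nhds (x := g T)).div this hT'.ne'
    have hev : ∀ᶠ τ in 𝓝[>] (0:ℝ), g T / (T - τ) < x :=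
      hcont.eventually (Filter.Tendsto.eventually_lt_const hy tendsto_id) |>.mono (fun _ h => h)
    filter_upwards [hev, Ioo_mem_nhdsGT_of_mem (Set.mem_Ico.2 ⟨le_refl (0:ℝ), hT'⟩),
      self_mem_nhdsWithin] with τ h1 h2 _
    exact lt_of_le_of_lt (fpgf_superadd_bound h0 hadd h2.1 h2.2) h1

lemma fpgf_coeff_zero (a : ℕ → ℝ) (C : ℝ) (hC : ∀ n, |a n| ≤ C * (n + 1))
    (h : ∀ v : ℝ, |v| < 1 → ∑' n, a n * v ^ n = 0) : ∀ n, a n = 0 := by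
  have hCpos : 0 ≤ C := by
    have := hC 0
    have := abs_nonneg (a 0)
    nlinarith
  have hsummax : ∀ (C' r : ℝ), |r| < 1 → Summable (fun m : ℕ => C' * (m + 1) * |r| ^ m) := by
    intro C' r hr
    have h1 : Summable (fun m : ℕ => (m : ℝ) ^ 1 * |r| ^ m) :=
      summable_pow_mul_geometric_of_norm_lt_one 1 (by simpa [abs_abs] using hr)
    have h2 : Summable (fun m : ℕ => |r| ^ m) := summable_geometric_of_lt_one (abs_nonneg r)
      (by simpa using hr)
    have := (h1.add h2).mul_left C'
    apply this.congr
    intro m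
    push_cast
    ring
  have habs : ∀ (b : ℕ → ℝ) (C' r : ℝ), |r| < 1 → (∀ m, |b m| ≤ C' * (m + 1)) →
      Summable (fun m : ℕ => b m * r ^ m) := by
    intro b C' r hr hb
    have hC' : 0 ≤ C' := by
      have := hb 0
      have := abs_nonneg (b 0)
      nlinarith
    apply Summable.of_norm
    apply (hsummax C' r hr).of_nonneg_of_le (fun m => norm_nonneg _)
    intro m
    rw [norm_mul, norm_pow, Real.norm_eq_abs, Real.norm_eq_abs]
    exact mul_le_mul (hb m) (le_refl _) (by positivity) (by positivity)
  intro n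
  induction n using Nat.strong_induction_on with
  | _ n ih =>
  set D := ∑' i : ℕ, C * ((i + n + 2 : ℕ) + 1) * (1/2 : ℝ) ^ i with hD
  have hDsum : Summable (fun i : ℕ => C * ((i + n + 2 : ℕ) + 1) * (1/2 : ℝ) ^ i) := by
    have := hsummax C (1/2) (by rw [abs_of_pos]; norm_num; norm_num)
    -- bound: C * ((i+n+2)+1) ≤ C*(i+1)*(n+4)?? easier: compare directly
    have h1 : Summable (fun i : ℕ => C * (i + 1) * |(1/2 : ℝ)| ^ i) := this
    have h2 : Summable (fun i : ℕ => (C * (n + 3)) * ((1/2 : ℝ) ^ i)) :=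
      (summable_geometric_of_lt_one (by norm_num) (by norm_num)).mul_left _
    have h3 := (h1.add h2)
    apply h3.of_nonneg_of_le
    · intro i; positivity
    · intro i
      have : |(1/2:ℝ)| = 1/2 := by norm_num
      rw [this] at h1 ⊢
      push_cast
      have hp : (0:ℝ) ≤ (1/2:ℝ)^i := by positivity
      nlinarith [hp]
  have hDnn : 0 ≤ D := tsum_nonneg (fun i => by positivity)
  have key : ∀ v : ℝ, 0 < v → v ≤ 1/2 → |a n| ≤ v * D := by
    intro v hv hv2
    have hv1 : |v| < 1 := by rw [abs_of_pos hv]; linarith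
    have hsum : Summable (fun m : ℕ => a m * v ^ m) := habs a C v hv1 hC
    have h0 := h v hv1
    have hsplit := Summable.sum_add_tsum_nat_add n hsum
    have hzero : ∑ i ∈ Finset.range n, a i * v ^ i = 0 := by
      apply Finset.sum_eq_zero
      intro i hi
      rw [ih i (Finset.mem_range.1 hi), zero_mul]
    rw [h0, hzero, zero_add] at hsplit
    -- hsplit : ∑' i, a (i+n) * v^(i+n) = 0
    have hfac : ∑' i : ℕ, a (i + n) * v ^ (i + n) = (∑' i : ℕ, a (i + n) * v ^ i) * v ^ n := by
      rw [← tsum_mul_right]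
      congr 1; ext i; rw [pow_add]; ring
    have hsum2 : Summable (fun i : ℕ => a (i + n) * v ^ i) := by
      apply habs (fun i => a (i + n)) (C * (n+1)) v hv1
      intro i
      refine (hC (i+n)).trans ?_
      push_cast
      nlinarith [mul_nonneg hCpos (mul_nonneg (Nat.cast_nonneg (α := ℝ) n) (Nat.cast_nonneg (α := ℝ) i))]
    have hvn : v ^ n ≠ 0 := pow_ne_zero n hv.ne'
    have htail : ∑' i : ℕ, a (i + n) * v ^ i = 0 := by
      have := hfac ▸ hsplit
      exact (mul_eq_zero.1 this).resolve_right hvn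
    have hsplit2 := Summable.sum_add_tsum_nat_add 1 hsum2
    rw [htail] at hsplit2
    have h1 : a n = -∑' i : ℕ, a (i + 1 + n) * v ^ (i + 1) := by
      have : ∑ i ∈ Finset.range 1, a (i + n) * v ^ i = a n := by simp
      rw [this] at hsplit2
      linarith [hsplit2]
    rw [h1, abs_neg]
    have hsum3 : Summable (fun i : ℕ => |a (i + 1 + n) * v ^ (i + 1)|) := by
      apply Summable.abs
      exact (hsum2.comp_injective (add_left_injective 1)).congr (fun i => by simp [add_comm, add_assoc, add_left_comm])
    calc |∑' i : ℕ, a (i + 1 + n) * v ^ (i + 1)| ≤ ∑' i : ℕ, |a (i + 1 + n) * v ^ (i + 1)| := by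
          have := norm_tsum_le_tsum_norm (f := fun i : ℕ => a (i + 1 + n) * v ^ (i + 1))
            (by simpa only [Real.norm_eq_abs] using hsum3)
          simpa only [Real.norm_eq_abs] using this
      _ ≤ ∑' i : ℕ, v * (C * ((i + n + 2 : ℕ) + 1) * (1/2 : ℝ) ^ i) := by
          apply Summable.tsum_le_tsum _ hsum3 (hDsum.mul_left v)
          intro i
          rw [abs_mul, abs_pow, abs_of_pos hv, pow_succ]
          have hvi : v ^ i ≤ (1/2:ℝ) ^ i := pow_le_pow_left₀ hv.le hv2 i
          have h5 : (0:ℝ) ≤ v ^ i := by positivity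
          have hb := hC (i + 1 + n)
          push_cast at hb ⊢
          have habs0 : (0:ℝ) ≤ |a (i + 1 + n)| := abs_nonneg _
          have hkey : |a (i + 1 + n)| * v ^ i ≤ C * (↑i + ↑n + 2 + 1) * (1/2) ^ i := by
            calc |a (i + 1 + n)| * v ^ i ≤ (C * (↑i + ↑n + 2)) * v ^ i := by
                  apply mul_le_mul_of_nonneg_right _ h5
                  linarith [hb]
              _ ≤ (C * (↑i + ↑n + 2 + 1)) * (1/2) ^ i := by
                  apply mul_le_mul _ hvi h5 (by positivity)
                  nlinarith [Nat.cast_nonneg (α := ℝ) i, Nat.cast_nonneg (α := ℝ) n]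
          calc |a (i + 1 + n)| * (v ^ i * v) = (|a (i + 1 + n)| * v ^ i) * v := by ring
            _ ≤ (C * (↑i + ↑n + 2 + 1) * (1/2) ^ i) * v :=
                mul_le_mul_of_nonneg_right hkey hv.le
            _ = v * (C * (↑i + ↑n + 2 + 1) * (1/2) ^ i) := by ring
      _ = v * D := by rw [tsum_mul_left]
  by_contra hne
  have hpos : 0 < |a n| := abs_pos.2 hne
  set v := min (1/2 : ℝ) (|a n| / (2 * (D + 1))) with hv
  have hvpos : 0 < v := lt_min (by norm_num) (by positivity)
  have := key v hvpos (min_le_left _ _)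
  have hle : v * D ≤ (|a n| / (2 * (D + 1))) * D := by
    apply mul_le_mul_of_nonneg_right (min_le_right _ _) hDnn
  have hlt : (|a n| / (2 * (D + 1))) * D < |a n| := by
    rw [div_mul_eq_mul_div, div_lt_iff₀ (by positivity)]
    nlinarith
  linarith

lemma fpgf_poisson_nonneg {lam z : ℝ} (hz : 0 ≤ lam * z) (j : ℕ) :
    0 ≤ Real.exp (-lam * z) * (lam * z) ^ j / (Nat.factorial j) := by positivity

lemma fpgf_poisson_le_one {lam z : ℝ} (hz : 0 ≤ lam * z) (j : ℕ) :
    Real.exp (-lam * z) * (lam * z) ^ j / (Nat.factorial j) ≤ 1 := by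
  rw [neg_mul]
  set w := lam * z with hw
  have h1 : w ^ j / (Nat.factorial j) ≤ Real.exp w := by
    refine le_trans ?_ (Real.sum_le_exp_of_nonneg hz (j + 1))
    apply Finset.single_le_sum (f := fun i => w ^ i / (Nat.factorial i))
    · intro i _; positivity
    · exact Finset.self_mem_range_succ j
  calc Real.exp (-w) * w ^ j / (Nat.factorial j)
      = (w ^ j / (Nat.factorial j)) * Real.exp (-w) := by ring
    _ ≤ Real.exp w * Real.exp (-w) := by
        apply mul_le_mul_of_nonneg_right h1 (Real.exp_nonneg _)
    _ = 1 := by rw [← Real.exp_add]; simp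

noncomputable def fpm (lam : ℝ) (μ : ℝ → Measure ℝ) (j : ℕ) (σ : ℝ) : ℝ :=
  ∫ z, Real.exp (-lam * z) * (lam * z) ^ j / (Nat.factorial j) ∂ (μ σ)

variable {lam : ℝ} {f : ℝ → ℝ} {μ : ℝ → Measure ℝ}

section
variable (hlam : 0 < lam)
  (hprob : ∀ s : ℝ, 0 < s → IsProbabilityMeasure (μ s))
  (hsupp : ∀ s : ℝ, 0 < s → μ s (Set.Iio 0) = 0)
  (hlaplace : ∀ s : ℝ, 0 < s → ∀ x : ℝ, 0 ≤ x →
      ∫ z, Real.exp (-x * z) ∂(μ s) = Real.exp (-s * f x))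

include hsupp in
lemma fpgf_ae {σ : ℝ} (hσ : 0 < σ) : ∀ᵐ z ∂(μ σ), 0 ≤ z := by
  have : {z : ℝ | ¬ 0 ≤ z} = Set.Iio 0 := by ext z; simp [Set.mem_Iio, not_le]
  rw [ae_iff, this]
  exact hsupp σ hσ

include hlam hsupp in
lemma fpgf_int {σ : ℝ} (hσ : 0 < σ) (j : ℕ) [IsProbabilityMeasure (μ σ)] :
    Integrable (fun z => Real.exp (-lam * z) * (lam * z) ^ j / (Nat.factorial j)) (μ σ) := by
  apply Integrable.mono' (integrable_const (1:ℝ))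
  · apply Continuous.aestronglyMeasurable
    continuity
  · filter_upwards [fpgf_ae hsupp hσ] with z hz
    have hw : 0 ≤ lam * z := mul_nonneg hlam.le hz
    rw [Real.norm_eq_abs, abs_of_nonneg (fpgf_poisson_nonneg hw j)]
    exact fpgf_poisson_le_one hw j

include hlam hsupp in
lemma fpgf_m_nonneg {σ : ℝ} (hσ : 0 < σ) (j : ℕ) : 0 ≤ fpm lam μ j σ := by
  apply integral_nonneg_of_ae
  filter_upwards [fpgf_ae hsupp hσ] with z hz
  exact fpgf_poisson_nonneg (mul_nonneg hlam.le hz) j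

include hlam hprob hsupp in
lemma fpgf_m_le_one {σ : ℝ} (hσ : 0 < σ) (j : ℕ) : fpm lam μ j σ ≤ 1 := by
  have := hprob σ hσ
  have h := integral_mono_ae (fpgf_int hlam hsupp hσ j) (integrable_const (1:ℝ)) ?_
  · simpa [fpm] using h
  · filter_upwards [fpgf_ae hsupp hσ] with z hz
    exact fpgf_poisson_le_one (mul_nonneg hlam.le hz) j

include hlam hprob hsupp hlaplace in
lemma fpgf_hM {σ : ℝ} (hσ : 0 < σ) {v : ℝ} (hv : |v| < 1) :
    (Summable fun j : ℕ => fpm lam μ j σ * v ^ j) ∧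
    ∑' j : ℕ, fpm lam μ j σ * v ^ j = Real.exp (-σ * f (lam * (1 - v))) := by
  have := hprob σ hσ
  have habs : ∀ j : ℕ, |fpm lam μ j σ * v ^ j| ≤ |v| ^ j := by
    intro j
    rw [abs_mul, abs_pow]
    have h1 : |fpm lam μ j σ| ≤ 1 := abs_le.2 ⟨by linarith [fpgf_m_nonneg hlam hsupp hσ j],
      fpgf_m_le_one hlam hprob hsupp hσ j⟩
    nlinarith [abs_nonneg (fpm lam μ j σ), pow_nonneg (abs_nonneg v) j, pow_le_one₀ (abs_nonneg v) hv.le (n := j)]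
  have hgeo : Summable fun j : ℕ => |v| ^ j := summable_geometric_of_lt_one (abs_nonneg v) hv
  have hsum : Summable fun j : ℕ => fpm lam μ j σ * v ^ j := by
    apply Summable.of_norm
    exact hgeo.of_nonneg_of_le (fun j => norm_nonneg _) (fun j => habs j)
  refine ⟨hsum, ?_⟩
  -- interchange
  have hint : ∀ j : ℕ, Integrable
      (fun z => (Real.exp (-lam * z) * (lam * z) ^ j / (Nat.factorial j)) * v ^ j) (μ σ) :=
    fun j => (fpgf_int hlam hsupp hσ j).mul_const _
  have hnorm : Summable fun j : ℕ =>
      ∫ z, ‖(Real.exp (-lam * z) * (lam * z) ^ j / (Nat.factorial j)) * v ^ j‖ ∂(μ σ) := by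
    apply hgeo.of_nonneg_of_le (fun j => integral_nonneg (fun z => norm_nonneg _))
    intro j
    have h := integral_mono_ae ((hint j).norm) (integrable_const (|v| ^ j)) ?_
    · simpa using h
    · filter_upwards [fpgf_ae hsupp hσ] with z hz
      have hw : 0 ≤ lam * z := mul_nonneg hlam.le hz
      rw [Real.norm_eq_abs, abs_mul, abs_of_nonneg (fpgf_poisson_nonneg hw j), abs_pow]
      have := fpgf_poisson_le_one hw j
      nlinarith [fpgf_poisson_nonneg hw j, pow_nonneg (abs_nonneg v) j]
  have hswap := integral_tsum_of_summable_integral_norm hint hnorm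
  have hfpm : ∀ j : ℕ, (∫ z, (Real.exp (-lam * z) * (lam * z) ^ j / (Nat.factorial j)) * v ^ j ∂(μ σ))
      = fpm lam μ j σ * v ^ j := fun j => by
    rw [integral_mul_const]; rfl
  have hptw : ∀ z : ℝ, (∑' j : ℕ, (Real.exp (-lam * z) * (lam * z) ^ j / (Nat.factorial j)) * v ^ j)
      = Real.exp (-(lam * (1 - v)) * z) := by
    intro z
    have h1 : ∀ j : ℕ, (Real.exp (-lam * z) * (lam * z) ^ j / (Nat.factorial j)) * v ^ j
        = Real.exp (-lam * z) * ((v * (lam * z)) ^ j / (Nat.factorial j)) := by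
      intro j; rw [mul_pow]; ring
    rw [tsum_congr h1, tsum_mul_left]
    have hexp : (∑' j : ℕ, (v * (lam * z)) ^ j / (Nat.factorial j)) = Real.exp (v * (lam * z)) := by
      rw [Real.exp_eq_exp_ℝ, NormedSpace.exp_eq_tsum_div]
    rw [hexp, ← Real.exp_add]
    congr 1
    ring
  calc ∑' j : ℕ, fpm lam μ j σ * v ^ j
      = ∑' j : ℕ, ∫ z, (Real.exp (-lam * z) * (lam * z) ^ j / (Nat.factorial j)) * v ^ j ∂(μ σ) := by
        exact (tsum_congr hfpm).symm
    _ = ∫ z, (∑' j : ℕ, (Real.exp (-lam * z) * (lam * z) ^ j / (Nat.factorial j)) * v ^ j) ∂(μ σ) := hswap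
    _ = ∫ z, Real.exp (-(lam * (1 - v)) * z) ∂(μ σ) := by
        exact integral_congr_ae (Filter.Eventually.of_forall (fun z => hptw z))
    _ = Real.exp (-σ * f (lam * (1 - v))) := by
        apply hlaplace σ hσ
        have : |v| < 1 := hv
        nlinarith [abs_lt.1 hv]

end
variable {lam : ℝ} {f : ℝ → ℝ} {μ : ℝ → Measure ℝ}

section
variable (hlam : 0 < lam)
  (hprob : ∀ s : ℝ, 0 < s → IsProbabilityMeasure (μ s))
  (hsupp : ∀ s : ℝ, 0 < s → μ s (Set.Iio 0) = 0)
  (hlaplace : ∀ s : ℝ, 0 < s → ∀ x : ℝ, 0 ≤ x →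
      ∫ z, Real.exp (-x * z) ∂(μ s) = Real.exp (-s * f x))


include hlam hlaplace in
lemma fpgf_m0 {σ : ℝ} (hσ : 0 < σ) : fpm lam μ 0 σ = Real.exp (-σ * f lam) := by
  rw [← hlaplace σ hσ lam hlam.le]
  unfold fpm
  congr 1
  ext z
  simp

include hprob hsupp hlaplace in
lemma fpgf_f_nonneg {x : ℝ} (hx : 0 ≤ x) : 0 ≤ f x := by
  have h1 := hlaplace 1 one_pos x hx
  have hp := hprob 1 one_pos
  have hae : ∀ᵐ z ∂(μ 1), 0 ≤ z := by
    have : {z : ℝ | ¬ 0 ≤ z} = Set.Iio 0 := by ext z; simp [Set.mem_Iio, not_le]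
    rw [ae_iff, this]; exact hsupp 1 one_pos
  have hle : (∫ z, Real.exp (-x * z) ∂(μ 1)) ≤ 1 := by
    by_cases hint : Integrable (fun z => Real.exp (-x * z)) (μ 1)
    · have h := integral_mono_ae hint (integrable_const (1:ℝ)) ?_
      · simpa using h
      · filter_upwards [hae] with z hz
        rw [Real.exp_le_one_iff]
        nlinarith
    · rw [integral_undef hint]; norm_num
  rw [h1] at hle
  rw [Real.exp_le_one_iff] at hle
  linarith

-- convolution identity
include hlam hprob hsupp hlaplace in
lemma fpgf_conv {σ τ : ℝ} (hσ : 0 < σ) (hτ : 0 < τ) (j : ℕ) :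
    fpm lam μ j (σ + τ) = ∑ i ∈ Finset.range (j + 1), fpm lam μ i σ * fpm lam μ (j - i) τ := by
  have hστ : 0 < σ + τ := by linarith
  set A : ℕ → ℝ := fun n => fpm lam μ n (σ + τ)
    - ∑ kl ∈ Finset.HasAntidiagonal.antidiagonal n, fpm lam μ kl.1 σ * fpm lam μ kl.2 τ with hA
  have hz : ∀ n, A n = 0 := by
    apply fpgf_coeff_zero A 2
    · intro n
      have h1 : |fpm lam μ n (σ + τ)| ≤ 1 :=
        abs_le.2 ⟨by linarith [fpgf_m_nonneg hlam hsupp hστ n],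
          fpgf_m_le_one hlam hprob hsupp hστ n⟩
      have h2 : |∑ kl ∈ Finset.HasAntidiagonal.antidiagonal n, fpm lam μ kl.1 σ * fpm lam μ kl.2 τ| ≤ n + 1 := by
        calc |∑ kl ∈ Finset.HasAntidiagonal.antidiagonal n, fpm lam μ kl.1 σ * fpm lam μ kl.2 τ|
            ≤ ∑ kl ∈ Finset.HasAntidiagonal.antidiagonal n, |fpm lam μ kl.1 σ * fpm lam μ kl.2 τ| :=
              Finset.abs_sum_le_sum_abs _ _
          _ ≤ ∑ _kl ∈ Finset.HasAntidiagonal.antidiagonal n, 1 := by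
              apply Finset.sum_le_sum
              intro kl _
              rw [abs_mul]
              have := fpgf_m_nonneg hlam hsupp hσ kl.1
              have := fpgf_m_le_one hlam hprob hsupp hσ kl.1
              have := fpgf_m_nonneg hlam hsupp hτ kl.2
              have := fpgf_m_le_one hlam hprob hsupp hτ kl.2
              rw [abs_of_nonneg ‹0 ≤ fpm lam μ kl.1 σ›, abs_of_nonneg ‹0 ≤ fpm lam μ kl.2 τ›]
              nlinarith
          _ = n + 1 := by rw [Finset.sum_const, Finset.Nat.card_antidiagonal]; simp
      calc |A n| ≤ |fpm lam μ n (σ + τ)|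
            + |∑ kl ∈ Finset.HasAntidiagonal.antidiagonal n, fpm lam μ kl.1 σ * fpm lam μ kl.2 τ| := abs_sub _ _
        _ ≤ 1 + (n + 1) := by linarith
        _ ≤ 2 * (n + 1) := by push_cast; linarith [Nat.cast_nonneg (α := ℝ) n]
    · intro v hv
      have hs1 := fpgf_hM hlam hprob hsupp hlaplace hστ hv
      have hs2 := fpgf_hM hlam hprob hsupp hlaplace hσ hv
      have hs3 := fpgf_hM hlam hprob hsupp hlaplace hτ hv
      have hnorm : ∀ {ρ : ℝ}, 0 < ρ → Summable (fun n : ℕ => ‖fpm lam μ n ρ * v ^ n‖) := by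
        intro ρ hρ
        apply (summable_geometric_of_lt_one (abs_nonneg v) hv).of_nonneg_of_le
          (fun n => norm_nonneg _)
        intro n
        rw [Real.norm_eq_abs, abs_mul, abs_pow]
        have h1 := fpgf_m_nonneg hlam hsupp hρ n
        have h2 := fpgf_m_le_one hlam hprob hsupp hρ n
        rw [abs_of_nonneg h1]
        nlinarith [pow_nonneg (abs_nonneg v) n]
      have hcauchy := tsum_mul_tsum_eq_tsum_sum_antidiagonal_of_summable_norm
        (f := fun n : ℕ => fpm lam μ n σ * v ^ n) (g := fun n : ℕ => fpm lam μ n τ * v ^ n)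
        (hnorm hσ) (hnorm hτ)
      have hterm : ∀ n : ℕ, (∑ kl ∈ Finset.HasAntidiagonal.antidiagonal n,
          (fpm lam μ kl.1 σ * v ^ kl.1) * (fpm lam μ kl.2 τ * v ^ kl.2))
          = (∑ kl ∈ Finset.HasAntidiagonal.antidiagonal n, fpm lam μ kl.1 σ * fpm lam μ kl.2 τ) * v ^ n := by
        intro n
        rw [Finset.sum_mul]
        apply Finset.sum_congr rfl
        intro kl hkl
        have := Finset.HasAntidiagonal.mem_antidiagonal.1 hkl
        rw [← this, pow_add]
        ring
      have hsumconv : Summable (fun n : ℕ => (∑ kl ∈ Finset.HasAntidiagonal.antidiagonal n,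
          fpm lam μ kl.1 σ * fpm lam μ kl.2 τ) * v ^ n) := by
        have := summable_sum_mul_antidiagonal_of_summable_norm'
          (f := fun n : ℕ => fpm lam μ n σ * v ^ n) (g := fun n : ℕ => fpm lam μ n τ * v ^ n)
          (hnorm hσ) hs2.1 (hnorm hτ) hs3.1
        exact this.congr hterm
      have htsum2 : ∑' n : ℕ, (∑ kl ∈ Finset.HasAntidiagonal.antidiagonal n,
          fpm lam μ kl.1 σ * fpm lam μ kl.2 τ) * v ^ n
          = Real.exp (-(σ + τ) * f (lam * (1 - v))) := by
        rw [← tsum_congr hterm, ← hcauchy, hs2.2, hs3.2, ← Real.exp_add]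
        congr 1
        ring
      have hAv : ∀ n : ℕ, A n * v ^ n = fpm lam μ n (σ + τ) * v ^ n
          - (∑ kl ∈ Finset.HasAntidiagonal.antidiagonal n, fpm lam μ kl.1 σ * fpm lam μ kl.2 τ) * v ^ n := by
        intro n; rw [hA]; ring
      rw [tsum_congr hAv, Summable.tsum_sub hs1.1 hsumconv, hs1.2, htsum2, sub_self]
  have := hz j
  rw [hA] at this
  have h2 := Finset.Nat.sum_antidiagonal_eq_sum_range_succ
    (f := fun k l => fpm lam μ k σ * fpm lam μ l τ) (n := j)
  simp only at this h2 ⊢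
  linarith [this, h2]

end
section
variable {lam a : ℝ} {μ : ℝ → Measure ℝ}
variable
  (ha : 0 ≤ a)
  (hm0 : ∀ {σ : ℝ}, 0 < σ → fpm lam μ 0 σ = Real.exp (-σ * a))
  (hmnn : ∀ {σ : ℝ}, 0 < σ → ∀ (j : ℕ), 0 ≤ fpm lam μ j σ)
  (hmle : ∀ {σ : ℝ}, 0 < σ → ∀ (j : ℕ), fpm lam μ j σ ≤ 1)
  (hconv : ∀ {σ τ : ℝ}, 0 < σ → 0 < τ → ∀ (j : ℕ),
    fpm lam μ j (σ + τ) = ∑ i ∈ Finset.range (j + 1), fpm lam μ i σ * fpm lam μ (j - i) τ)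

-- superadditivity of r_j for j ≥ 1
include ha hm0 hmnn hconv in
lemma fpgf_r_superadd {j : ℕ} (hj : 1 ≤ j) : ∀ x y : ℝ, 0 < x → 0 < y →
    (fpm lam μ j x * Real.exp (a * x)) + (fpm lam μ j y * Real.exp (a * y))
      ≤ fpm lam μ j (x + y) * Real.exp (a * (x + y)) := by
  intro x y hx hy
  have hkey : fpm lam μ 0 x * fpm lam μ j y + fpm lam μ j x * fpm lam μ 0 y
      ≤ fpm lam μ j (x + y) := by
    rw [hconv hx hy j]
    have hsub : ({0, j} : Finset ℕ) ⊆ Finset.range (j + 1) := by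
      intro i hi
      rcases Finset.mem_insert.1 hi with h | h
      · simp [h]
      · rw [Finset.mem_singleton.1 h]; simp
    have hnn : ∀ i ∈ Finset.range (j + 1), i ∉ ({0, j} : Finset ℕ) →
        0 ≤ fpm lam μ i x * fpm lam μ (j - i) y :=
      fun i _ _ => mul_nonneg (hmnn hx i) (hmnn hy (j - i))
    have := Finset.sum_le_sum_of_subset_of_nonneg hsub hnn
    refine le_trans (le_of_eq ?_) this
    rw [Finset.sum_pair (by omega : (0:ℕ) ≠ j)]
    simp
  have e1 : fpm lam μ 0 x = Real.exp (-x * a) := hm0 hx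
  have e2 : fpm lam μ 0 y = Real.exp (-y * a) := hm0 hy
  have hexp : (0:ℝ) < Real.exp (a * (x + y)) := Real.exp_pos _
  have expand : (fpm lam μ 0 x * fpm lam μ j y + fpm lam μ j x * fpm lam μ 0 y)
      * Real.exp (a * (x + y))
      = fpm lam μ j y * Real.exp (a * y) + fpm lam μ j x * Real.exp (a * x) := by
    have k1 : Real.exp (-x * a) * Real.exp (a * (x + y)) = Real.exp (a * y) := by
      rw [← Real.exp_add]; ring_nf
    have k2 : Real.exp (-y * a) * Real.exp (a * (x + y)) = Real.exp (a * x) := by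
      rw [← Real.exp_add]; ring_nf
    rw [e1, e2]
    linear_combination (fpm lam μ j y) * k1 + (fpm lam μ j x) * k2
  calc fpm lam μ j x * Real.exp (a * x) + fpm lam μ j y * Real.exp (a * y)
      = (fpm lam μ 0 x * fpm lam μ j y + fpm lam μ j x * fpm lam μ 0 y)
        * Real.exp (a * (x + y)) := by rw [expand]; ring
    _ ≤ fpm lam μ j (x + y) * Real.exp (a * (x + y)) :=
        mul_le_mul_of_nonneg_right hkey hexp.le

end

section Deriv
variable {lam a : ℝ} {μ : ℝ → Measure ℝ} {b K : ℕ → ℝ}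
variable
  (ha : 0 ≤ a)
  (hm0 : ∀ {σ : ℝ}, 0 < σ → fpm lam μ 0 σ = Real.exp (-σ * a))
  (hmnn : ∀ {σ : ℝ}, 0 < σ → ∀ (j : ℕ), 0 ≤ fpm lam μ j σ)
  (hmle : ∀ {σ : ℝ}, 0 < σ → ∀ (j : ℕ), fpm lam μ j σ ≤ 1)
  (hconv : ∀ {σ τ : ℝ}, 0 < σ → 0 < τ → ∀ (j : ℕ),
    fpm lam μ j (σ + τ) = ∑ i ∈ Finset.range (j + 1), fpm lam μ i σ * fpm lam μ (j - i) τ)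
  (hmb : ∀ j : ℕ, 1 ≤ j → Tendsto (fun τ => fpm lam μ j τ / τ) (𝓝[>] (0:ℝ)) (𝓝 (b j)))
  (hKnn : ∀ j, 0 ≤ K j)
  (hK : ∀ j : ℕ, 1 ≤ j → ∀ τ : ℝ, 0 < τ → τ ≤ 1/2 → fpm lam μ j τ ≤ K j * τ)

lemma fpgf_exp_slope : Tendsto (fun τ : ℝ => (Real.exp (-(a * τ)) - 1) / τ)
    (𝓝[>] (0:ℝ)) (𝓝 (-a)) := by
  have hd : HasDerivAt (fun τ : ℝ => Real.exp (-(a * τ))) (-a) 0 := by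
    have h1 : HasDerivAt (fun τ : ℝ => -(a * τ)) (-a) 0 := by
      exact (((hasDerivAt_id (0:ℝ)).const_mul a).neg).congr_deriv (by simp)
    simpa using h1.exp
  rw [hasDerivAt_iff_tendsto_slope] at hd
  apply Tendsto.congr' _ (hd.mono_left (nhdsWithin_mono 0 (fun x hx => ne_of_gt hx)))
  filter_upwards [self_mem_nhdsWithin] with τ hτ
  rw [slope_def_field]
  simp [div_eq_div_iff]

include ha hm0 hmnn hmle hconv hmb hKnn hK in
lemma fpgf_contL {σ : ℝ} (hσ : 0 < σ) (i : ℕ) :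
    Tendsto (fun x => fpm lam μ i x) (𝓝[<] σ) (𝓝 (fpm lam μ i σ)) := by
  set L := max 0 (σ - 1/2) with hL
  have hLσ : L < σ := max_lt hσ (by linarith)
  have hmem : Set.Ioo L σ ∈ 𝓝[<] σ := Ioo_mem_nhdsLT_of_mem (Set.mem_Ioc.2 ⟨hLσ, le_refl σ⟩)
  set C : ℝ := ∑ l ∈ Finset.range i, K (i - l) with hC
  have hCnn : 0 ≤ C := Finset.sum_nonneg (fun l _ => hKnn _)
  have hbound : ∀ x ∈ Set.Ioo L σ,
      |fpm lam μ i x - fpm lam μ i σ| ≤ (1 - Real.exp (-(a * (σ - x)))) + C * (σ - x) := by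
    intro x hx
    have hx0 : 0 < x := lt_of_le_of_lt (le_max_left _ _) hx.1
    set τ := σ - x with hτdef
    have hτ : 0 < τ := by simp only [hτdef]; linarith [hx.2]
    have hτ2 : τ ≤ 1/2 := by
      have := hx.1
      have : σ - 1/2 ≤ L := le_max_right _ _
      simp only [hτdef]
      linarith [lt_of_le_of_lt this hx.1]
    have hexpand : fpm lam μ i σ = ∑ l ∈ Finset.range i, fpm lam μ l x * fpm lam μ (i - l) τ
        + fpm lam μ i x * Real.exp (-τ * a) := by
      have h1 := hconv hx0 hτ i
      have h2 : x + τ = σ := by simp [hτdef]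
      rw [h2] at h1
      have h3 : fpm lam μ (i - i) τ = Real.exp (-τ * a) := by rw [Nat.sub_self, hm0 hτ]
      rw [h1, Finset.sum_range_succ, h3]
    have hE : Real.exp (-τ * a) ≤ 1 := by
      rw [Real.exp_le_one_iff]
      nlinarith
    have hE0 : 0 ≤ Real.exp (-τ * a) := Real.exp_nonneg _
    have hsum_nn : 0 ≤ ∑ l ∈ Finset.range i, fpm lam μ l x * fpm lam μ (i - l) τ :=
      Finset.sum_nonneg (fun l _ => mul_nonneg (hmnn hx0 l) (hmnn hτ _))
    have hsum_le : ∑ l ∈ Finset.range i, fpm lam μ l x * fpm lam μ (i - l) τ ≤ C * τ := by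
      rw [hC, Finset.sum_mul]
      apply Finset.sum_le_sum
      intro l hl
      have h1 : fpm lam μ (i - l) τ ≤ K (i - l) * τ :=
        hK (i - l) (by have := Finset.mem_range.1 hl; omega) τ hτ hτ2
      have h2 := hmnn hx0 l
      have h3 := hmle hx0 l
      nlinarith [hmnn hτ (i - l)]
    have hmx0 := hmnn hx0 i
    have hmx1 := hmle hx0 i
    rw [hexpand]
    rw [abs_le]
    constructor
    · have harg : -τ * a = -(a * τ) := by ring
      rw [← harg]
      nlinarith
    · have harg : -τ * a = -(a * τ) := by ring
      rw [← harg]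
      nlinarith
  have hzero : Tendsto (fun x => (1 - Real.exp (-(a * (σ - x)))) + C * (σ - x)) (𝓝[<] σ) (𝓝 0) := by
    apply Tendsto.mono_left _ nhdsWithin_le_nhds
    have : Continuous (fun x : ℝ => (1 - Real.exp (-(a * (σ - x)))) + C * (σ - x)) := by
      fun_prop
    have h := this.tendsto σ
    simpa using h
  rw [tendsto_iff_dist_tendsto_zero]
  have hb2 : ∀ᶠ x in 𝓝[<] σ, dist (fpm lam μ i x) (fpm lam μ i σ)
      ≤ (1 - Real.exp (-(a * (σ - x)))) + C * (σ - x) := by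
    filter_upwards [hmem] with x hx
    rw [Real.dist_eq]
    exact hbound x hx
  exact squeeze_zero' (Eventually.of_forall (fun x => dist_nonneg)) hb2 hzero

include ha hm0 hmnn hmle hconv hmb hKnn hK in
lemma fpgf_hasDerivAt {σ : ℝ} (hσ : 0 < σ) (j : ℕ) :
    HasDerivAt (fpm lam μ j)
      (-a * fpm lam μ j σ + ∑ i ∈ Finset.range j, fpm lam μ i σ * b (j - i)) σ := by
  set D := -a * fpm lam μ j σ + ∑ i ∈ Finset.range j, fpm lam μ i σ * b (j - i) with hD
  rw [hasDerivAt_iff_tendsto_slope]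
  rw [← nhdsLT_sup_nhdsGT, tendsto_sup]
  constructor
  · -- left limit
    have hmapL : Tendsto (fun x : ℝ => σ - x) (𝓝[<] σ) (𝓝[>] (0:ℝ)) := by
      apply tendsto_nhdsWithin_of_tendsto_nhds_of_eventually_within
      · apply Tendsto.mono_left _ nhdsWithin_le_nhds
        have : Continuous (fun x : ℝ => σ - x) := continuous_const.sub continuous_id
        simpa using this.tendsto σ
      · filter_upwards [self_mem_nhdsWithin] with x hx
        simpa [Set.mem_Ioi, sub_pos] using hx
    set L := max 0 (σ - 1/2) with hL
    have hLσ : L < σ := max_lt hσ (by linarith)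
    have hmem : Set.Ioo L σ ∈ 𝓝[<] σ := Ioo_mem_nhdsLT_of_mem (Set.mem_Ioc.2 ⟨hLσ, le_refl σ⟩)
    have hlim : Tendsto (fun x => fpm lam μ j x * ((Real.exp (-(a * (σ - x))) - 1) / (σ - x))
        + ∑ i ∈ Finset.range j, fpm lam μ i x * (fpm lam μ (j - i) (σ - x) / (σ - x)))
        (𝓝[<] σ) (𝓝 D) := by
      rw [hD]
      have h1 : Tendsto (fun x => fpm lam μ j x * ((Real.exp (-(a * (σ - x))) - 1) / (σ - x)))
          (𝓝[<] σ) (𝓝 (fpm lam μ j σ * (-a))) :=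
        (fpgf_contL ha hm0 hmnn hmle hconv hmb hKnn hK hσ j).mul
          ((fpgf_exp_slope (a := a)).comp hmapL)
      have h2 : Tendsto (fun x => ∑ i ∈ Finset.range j,
          fpm lam μ i x * (fpm lam μ (j - i) (σ - x) / (σ - x)))
          (𝓝[<] σ) (𝓝 (∑ i ∈ Finset.range j, fpm lam μ i σ * b (j - i))) := by
        apply tendsto_finset_sum
        intro i hi
        exact (fpgf_contL ha hm0 hmnn hmle hconv hmb hKnn hK hσ i).mul
          ((hmb (j - i) (by have := Finset.mem_range.1 hi; omega)).comp hmapL)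
      have := h1.add h2
      convert this using 2
      ring
    refine Tendsto.congr' ?_ hlim
    filter_upwards [hmem] with x hx
    have hx0 : 0 < x := lt_of_le_of_lt (le_max_left _ _) hx.1
    have hτ : 0 < σ - x := by linarith [hx.2]
    have hexpand : fpm lam μ j σ = ∑ l ∈ Finset.range j, fpm lam μ l x * fpm lam μ (j - l) (σ - x)
        + fpm lam μ j x * Real.exp (-(a * (σ - x))) := by
      have h1 := hconv hx0 hτ j
      rw [show x + (σ - x) = σ by ring] at h1
      have h3 : fpm lam μ (j - j) (σ - x) = Real.exp (-(a * (σ - x))) := by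
        rw [Nat.sub_self, hm0 hτ]; try ring_nf
      rw [h1, Finset.sum_range_succ, h3]
    symm
    rw [slope_def_field, hexpand]
    rw [Finset.sum_congr rfl (fun i _ => (mul_div_assoc (fpm lam μ i x)
      (fpm lam μ (j - i) (σ - x)) (σ - x)).symm), ← Finset.sum_div,
      ← mul_div_assoc, ← add_div]
    rw [show x - σ = -(σ - x) by ring, div_neg]
    rw [show fpm lam μ j x - (∑ l ∈ Finset.range j, fpm lam μ l x * fpm lam μ (j - l) (σ - x)
        + fpm lam μ j x * Real.exp (-(a * (σ - x))))
      = -(fpm lam μ j x * (Real.exp (-(a * (σ - x))) - 1)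
        + ∑ i ∈ Finset.range j, fpm lam μ i x * fpm lam μ (j - i) (σ - x)) from by ring]
    rw [neg_div, neg_neg]
  · -- right limit
    have hmapR : Tendsto (fun x : ℝ => x - σ) (𝓝[>] σ) (𝓝[>] (0:ℝ)) := by
      apply tendsto_nhdsWithin_of_tendsto_nhds_of_eventually_within
      · apply Tendsto.mono_left _ nhdsWithin_le_nhds
        have : Continuous (fun x : ℝ => x - σ) := continuous_id.sub continuous_const
        simpa using this.tendsto σ
      · filter_upwards [self_mem_nhdsWithin] with x hx
        simpa [Set.mem_Ioi, sub_pos] using hx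
    have hlim : Tendsto (fun x => fpm lam μ j σ * ((Real.exp (-(a * (x - σ))) - 1) / (x - σ))
        + ∑ i ∈ Finset.range j, fpm lam μ i σ * (fpm lam μ (j - i) (x - σ) / (x - σ)))
        (𝓝[>] σ) (𝓝 D) := by
      rw [hD]
      have h1 : Tendsto (fun x => fpm lam μ j σ * ((Real.exp (-(a * (x - σ))) - 1) / (x - σ)))
          (𝓝[>] σ) (𝓝 (fpm lam μ j σ * (-a))) :=
        ((fpgf_exp_slope (a := a)).comp hmapR).const_mul _
      have h2 : Tendsto (fun x => ∑ i ∈ Finset.range j,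
          fpm lam μ i σ * (fpm lam μ (j - i) (x - σ) / (x - σ)))
          (𝓝[>] σ) (𝓝 (∑ i ∈ Finset.range j, fpm lam μ i σ * b (j - i))) := by
        apply tendsto_finset_sum
        intro i hi
        exact ((hmb (j - i) (by have := Finset.mem_range.1 hi; omega)).comp hmapR).const_mul _
      have := h1.add h2
      convert this using 2
      ring
    refine Tendsto.congr' ?_ hlim
    filter_upwards [self_mem_nhdsWithin] with x hx
    have hx' : σ < x := hx
    have hτ : 0 < x - σ := by linarith
    have hexpand : fpm lam μ j x = ∑ l ∈ Finset.range j, fpm lam μ l σ * fpm lam μ (j - l) (x - σ)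
        + fpm lam μ j σ * Real.exp (-(a * (x - σ))) := by
      have h1 := hconv hσ hτ j
      rw [show σ + (x - σ) = x by ring] at h1
      have h3 : fpm lam μ (j - j) (x - σ) = Real.exp (-(a * (x - σ))) := by
        rw [Nat.sub_self, hm0 hτ]; try ring_nf
      rw [h1, Finset.sum_range_succ, h3]
    symm
    rw [slope_def_field, hexpand]
    rw [Finset.sum_congr rfl (fun i _ => (mul_div_assoc (fpm lam μ i σ)
      (fpm lam μ (j - i) (x - σ)) (x - σ)).symm), ← Finset.sum_div,
      ← mul_div_assoc, ← add_div]
    rw [show ∑ l ∈ Finset.range j, fpm lam μ l σ * fpm lam μ (j - l) (x - σ)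
        + fpm lam μ j σ * Real.exp (-(a * (x - σ))) - fpm lam μ j σ
      = fpm lam μ j σ * (Real.exp (-(a * (x - σ))) - 1)
        + ∑ i ∈ Finset.range j, fpm lam μ i σ * fpm lam μ (j - i) (x - σ) from by ring]

end Deriv
section
variable {lam a v : ℝ} {f : ℝ → ℝ} {μ : ℝ → Measure ℝ}

variable
  (ha : 0 ≤ a)
  (hm0 : ∀ {σ : ℝ}, 0 < σ → fpm lam μ 0 σ = Real.exp (-σ * a))
  (hmnn : ∀ {σ : ℝ}, 0 < σ → ∀ (j : ℕ), 0 ≤ fpm lam μ j σ)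
  (hmle : ∀ {σ : ℝ}, 0 < σ → ∀ (j : ℕ), fpm lam μ j σ ≤ 1)
  (hconv : ∀ {σ τ : ℝ}, 0 < σ → 0 < τ → ∀ (j : ℕ),
    fpm lam μ j (σ + τ) = ∑ i ∈ Finset.range (j + 1), fpm lam μ i σ * fpm lam μ (j - i) τ)
  (hrsup : ∀ {j : ℕ}, 1 ≤ j → ∀ x y : ℝ, 0 < x → 0 < y →
    (fpm lam μ j x * Real.exp (a * x)) + (fpm lam μ j y * Real.exp (a * y))
      ≤ fpm lam μ j (x + y) * Real.exp (a * (x + y)))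
  (hmv : ∀ {σ : ℝ}, 0 < σ → ∀ j : ℕ, fpm lam μ j σ ≤ v⁻¹ ^ j)
  (hv : 0 < v)

include ha hm0 hmnn hmle hconv hrsup hmv hv in
lemma fpgf_b_exists : ∃ b : ℕ → ℝ, b 0 = 0 ∧ (∀ j, 0 ≤ b j)
    ∧ (∀ j, 1 ≤ j → Tendsto (fun τ => fpm lam μ j τ / τ) (𝓝[>] (0:ℝ)) (𝓝 (b j)))
    ∧ (∀ j, 1 ≤ j → ∀ τ : ℝ, 0 < τ → τ ≤ 1/2 →
        fpm lam μ j τ ≤ (2 * Real.exp a * v⁻¹ ^ j) * τ)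
    ∧ (∀ j, b j ≤ 2 * Real.exp a * v⁻¹ ^ j) := by
  set g : ℕ → ℝ → ℝ := fun j σ => if j = 0 then 0 else fpm lam μ j σ * Real.exp (a * σ)
    with hg
  have hg0 : ∀ j x, 0 < x → 0 ≤ g j x := by
    intro j x hx
    by_cases hj : j = 0
    · simp [hg, hj]
    · simp only [hg, if_neg hj]
      exact mul_nonneg (hmnn hx j) (Real.exp_nonneg _)
  have hgadd : ∀ j, ∀ x y : ℝ, 0 < x → 0 < y → g j x + g j y ≤ g j (x + y) := by
    intro j x y hx hy
    by_cases hj : j = 0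
    · simp [hg, hj]
    · simp only [hg, if_neg hj]
      exact hrsup (Nat.one_le_iff_ne_zero.2 hj) x y hx hy
  choose b hbnn hbleT hbtend using fun j => fpgf_superadd_tendsto (hg0 j) (hgadd j)
  have hb0 : b 0 = 0 := by
    have h1 := hbleT 0 1 one_pos
    have h2 := hbnn 0
    simp [hg] at h1
    linarith
  have hgj : ∀ j, 1 ≤ j → ∀ σ : ℝ, g j σ = fpm lam μ j σ * Real.exp (a * σ) := by
    intro j hj σ
    simp [hg, Nat.one_le_iff_ne_zero.1 hj]
  refine ⟨b, hb0, hbnn, ?_, ?_, ?_⟩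
  · intro j hj
    have h1 : Tendsto (fun τ => g j τ / τ * Real.exp (-(a * τ))) (𝓝[>] (0:ℝ))
        (𝓝 (b j * Real.exp (-(a * 0)))) := by
      apply (hbtend j).mul
      apply Tendsto.mono_left _ nhdsWithin_le_nhds
      exact (Real.continuous_exp.comp ((continuous_const.mul continuous_id).neg)).tendsto 0
    simp only [mul_zero, neg_zero, Real.exp_zero, mul_one] at h1
    apply Tendsto.congr' _ h1
    filter_upwards [self_mem_nhdsWithin] with τ hτ
    have hτ0 : (0:ℝ) < τ := hτ
    rw [hgj j hj τ, div_mul_eq_mul_div, mul_assoc, ← Real.exp_add]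
    simp
  · intro j hj τ hτ hτ2
    have hτ1 : τ < 1 := lt_of_le_of_lt hτ2 (by norm_num)
    have h1 : fpm lam μ j τ / τ ≤ g j τ / τ := by
      apply (div_le_div_iff_of_pos_right hτ).2
      rw [hgj j hj τ]
      exact le_mul_of_one_le_right (hmnn hτ j) (Real.one_le_exp (by positivity))
    have h2 : g j τ / τ ≤ g j 1 / (1 - τ) := fpgf_superadd_bound (hg0 j) (hgadd j) hτ hτ1
    have h3 : g j 1 / (1 - τ) ≤ g j 1 / (1/2) :=
      div_le_div_of_nonneg_left (hg0 j 1 one_pos) (by norm_num) (by linarith)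
    have h4 : g j 1 ≤ Real.exp a * v⁻¹ ^ j := by
      rw [hgj j hj 1, mul_one]
      calc fpm lam μ j 1 * Real.exp a ≤ v⁻¹ ^ j * Real.exp a :=
            mul_le_mul_of_nonneg_right (hmv one_pos j) (Real.exp_nonneg _)
        _ = Real.exp a * v⁻¹ ^ j := by ring
    have h5 : fpm lam μ j τ / τ ≤ 2 * Real.exp a * v⁻¹ ^ j := by
      calc fpm lam μ j τ / τ ≤ g j 1 / (1/2) := le_trans h1 (le_trans h2 h3)
        _ = 2 * g j 1 := by ring
        _ ≤ 2 * (Real.exp a * v⁻¹ ^ j) := by linarith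
        _ = 2 * Real.exp a * v⁻¹ ^ j := by ring
    exact (div_le_iff₀ hτ).1 h5
  · intro j
    by_cases hj : j = 0
    · rw [hj, hb0]
      have : (0:ℝ) < v⁻¹ ^ 0 := by norm_num
      positivity
    · have hj1 : 1 ≤ j := Nat.one_le_iff_ne_zero.2 hj
      have h1 := hbleT j 1 one_pos
      rw [hgj j hj1 1, mul_one, div_one] at h1
      calc b j ≤ fpm lam μ j 1 * Real.exp a := h1
        _ ≤ v⁻¹ ^ j * Real.exp a :=
            mul_le_mul_of_nonneg_right (hmv one_pos j) (Real.exp_nonneg _)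
        _ ≤ 2 * Real.exp a * v⁻¹ ^ j := by nlinarith [Real.exp_pos a, pow_nonneg (le_of_lt (inv_pos.2 hv)) j]
end

section B
variable {lam a v u : ℝ} {f : ℝ → ℝ} {μ : ℝ → Measure ℝ} {b : ℕ → ℝ}
variable
  (ha : 0 ≤ a)
  (hm0 : ∀ {σ : ℝ}, 0 < σ → fpm lam μ 0 σ = Real.exp (-σ * a))
  (hM : ∀ {σ : ℝ}, 0 < σ → ∀ {w : ℝ}, |w| < 1 →
    (Summable fun j : ℕ => fpm lam μ j σ * w ^ j) ∧
    ∑' j : ℕ, fpm lam μ j σ * w ^ j = Real.exp (-σ * f (lam * (1 - w))))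
  (hmnn' : ∀ {σ : ℝ}, 0 < σ → ∀ (j : ℕ), 0 ≤ fpm lam μ j σ)
  (hb0 : b 0 = 0)
  (hbnn : ∀ j, 0 ≤ b j)
  (hbtend : ∀ j, 1 ≤ j → Tendsto (fun τ => fpm lam μ j τ / τ) (𝓝[>] (0:ℝ)) (𝓝 (b j)))
  (hKb : ∀ j, 1 ≤ j → ∀ τ : ℝ, 0 < τ → τ ≤ 1/2 →
      fpm lam μ j τ ≤ (2 * Real.exp a * v⁻¹ ^ j) * τ)
  (hv : 0 < v) (hv1 : v < 1) (huv : |u| < v)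

include ha hm0 hM hmnn' hb0 hbnn hbtend hKb hv hv1 huv in
lemma fpgf_B_val : ∑' j : ℕ, b j * u ^ j = a - f (lam * (1 - u)) := by
  have hu1 : |u| < 1 := lt_trans huv hv1
  set φ : ℕ → ℝ → ℝ := fun j τ => if j = 0 then 0 else fpm lam μ j τ / τ with hφ
  have hw : |u| / v < 1 := (div_lt_one hv).2 huv
  have hwnn : 0 ≤ |u| / v := div_nonneg (abs_nonneg u) hv.le
  set c := f (lam * (1 - u)) with hc
  -- dominated convergence
  have hdom : Tendsto (fun τ => ∑' j : ℕ, φ j τ * u ^ j) (𝓝[>] (0:ℝ))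
      (𝓝 (∑' j : ℕ, b j * u ^ j)) := by
    apply tendsto_tsum_of_dominated_convergence
      (bound := fun j : ℕ => 2 * Real.exp a * (|u| / v) ^ j)
    · exact (summable_geometric_of_lt_one hwnn hw).mul_left _
    · intro j
      by_cases hj : j = 0
      · simp only [hφ, hj, if_pos, hb0]
        simpa using tendsto_const_nhds
      · simp only [hφ, if_neg hj]
        exact (hbtend j (Nat.one_le_iff_ne_zero.2 hj)).mul_const _
    · filter_upwards [Ioc_mem_nhdsGT_of_mem
        (Set.mem_Ico.2 ⟨le_refl (0:ℝ), (by norm_num : (0:ℝ) < 1/2)⟩)] with τ hτ j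
      by_cases hj : j = 0
      · simp only [hφ, hj, if_pos]
        have : (0:ℝ) ≤ 2 * Real.exp a * (|u|/v) ^ 0 := by positivity
        simpa using this
      · simp only [hφ, if_neg hj]
        have h1 : 0 ≤ fpm lam μ j τ / τ := div_nonneg (hmnn' hτ.1 j) hτ.1.le
        have h2 : fpm lam μ j τ / τ ≤ 2 * Real.exp a * v⁻¹ ^ j :=
          (div_le_iff₀ hτ.1).2 (hKb j (Nat.one_le_iff_ne_zero.2 hj) τ hτ.1 hτ.2)
        rw [Real.norm_eq_abs, abs_mul, abs_pow]
        calc |fpm lam μ j τ / τ| * |u| ^ j ≤ (2 * Real.exp a * v⁻¹ ^ j) * |u| ^ j := by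
              rw [abs_of_nonneg h1]
              exact mul_le_mul_of_nonneg_right h2 (pow_nonneg (abs_nonneg u) j)
          _ = 2 * Real.exp a * (|u| / v) ^ j := by
              rw [div_pow, div_eq_mul_inv, ← inv_pow]
              ring
  -- identification with explicit function
  have hev : (fun τ => ∑' j : ℕ, φ j τ * u ^ j) =ᶠ[𝓝[>] (0:ℝ)]
      (fun τ => (Real.exp (-τ * c) - Real.exp (-τ * a)) / τ) := by
    filter_upwards [self_mem_nhdsWithin] with τ hτ
    have hτ0 : (0:ℝ) < τ := hτ
    have hMτ := hM hτ0 hu1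
    have hterm : ∀ j : ℕ, φ j τ * u ^ j
        = fpm lam μ j τ * u ^ j / τ - (if j = 0 then Real.exp (-τ * a) / τ else 0) := by
      intro j
      by_cases hj : j = 0
      · simp only [hφ, hj, if_pos, pow_zero]
        rw [hm0 hτ0]
        simp
      · simp only [hφ, if_neg hj]
        ring
    rw [tsum_congr hterm]
    have hs1 : Summable (fun j : ℕ => fpm lam μ j τ * u ^ j / τ) := hMτ.1.div_const τ
    have hs2 : Summable (fun j : ℕ => if j = 0 then Real.exp (-τ * a) / τ else 0) := by
      apply summable_of_ne_finset_zero (s := {0})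
      intro j hj
      simp [Finset.mem_singleton.1, if_neg (by simpa using hj)]
    rw [Summable.tsum_sub hs1 hs2]
    have e1 : ∑' j : ℕ, fpm lam μ j τ * u ^ j / τ = Real.exp (-τ * c) / τ := by
      rw [tsum_div_const, hMτ.2]
    have e2 : (∑' j : ℕ, if j = 0 then Real.exp (-τ * a) / τ else 0)
        = Real.exp (-τ * a) / τ := by
      rw [tsum_eq_single 0]
      · simp
      · intro j hj; simp [if_neg hj]
    rw [e1, e2, div_sub_div_same]
  -- derivative limit
  have hder : Tendsto (fun τ => (Real.exp (-τ * c) - Real.exp (-τ * a)) / τ)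
      (𝓝[>] (0:ℝ)) (𝓝 (a - c)) := by
    have hd : HasDerivAt (fun τ : ℝ => Real.exp (-τ * c) - Real.exp (-τ * a)) (a - c) 0 := by
      have h1 : HasDerivAt (fun τ : ℝ => -τ * c) (-c) 0 := by
        simpa [mul_comm] using ((hasDerivAt_id (0:ℝ)).const_mul (-c))
      have h2 : HasDerivAt (fun τ : ℝ => -τ * a) (-a) 0 := by
        simpa [mul_comm] using ((hasDerivAt_id (0:ℝ)).const_mul (-a))
      have := (h1.exp).sub (h2.exp)
      have heq : (a : ℝ) - c = -c + a := by ring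
      rw [heq]
      exact this.congr_deriv (by simp)
    rw [hasDerivAt_iff_tendsto_slope] at hd
    apply Tendsto.congr' _ (hd.mono_left (nhdsWithin_mono 0 (fun x hx => ne_of_gt hx)))
    filter_upwards [self_mem_nhdsWithin] with τ hτ
    rw [slope_def_field]
    simp
  exact tendsto_nhds_unique (hdom.congr' hev) hder

end B

end FPGFHelpers

/-- The generating function of the first-passage time densities
`q_k^f(s) = (d/ds) ∫ P(N(z) ≥ k) P(H^f(s) ∈ dz)` satisfies
`Σ_{k≥1} u^k q_k^f(s) = (u/(1-u)) f(λ(1-u)) e^{-s f(λ(1-u))}`. -/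
theorem first_passage_generating_function
    (lam : ℝ) (hlam : 0 < lam) (f : ℝ → ℝ) (μ : ℝ → Measure ℝ)
    (hprob : ∀ s : ℝ, 0 < s → IsProbabilityMeasure (μ s))
    (hsupp : ∀ s : ℝ, 0 < s → μ s (Set.Iio 0) = 0)
    (hlaplace : ∀ s : ℝ, 0 < s → ∀ x : ℝ, 0 ≤ x →
      ∫ z, Real.exp (-x * z) ∂(μ s) = Real.exp (-s * f x))
    (q : ℕ → ℝ → ℝ)
    (hq : ∀ (k : ℕ) (s : ℝ), q k s =
      deriv (fun σ : ℝ => ∫ z,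
        (1 - ∑ j ∈ Finset.range k, Real.exp (-lam * z) * (lam * z) ^ j / (Nat.factorial j))
          ∂(μ σ)) s) :
    ∀ s : ℝ, 0 < s → ∀ u : ℝ, |u| < 1 →
      ∑' k : ℕ, u ^ (k + 1) * q (k + 1) s
        = u / (1 - u) * f (lam * (1 - u)) * Real.exp (-s * f (lam * (1 - u))) := by
  intro s hs u hu
  -- notation
  set a : ℝ := f lam with haa
  have ha : 0 ≤ a := fpgf_f_nonneg hprob hsupp hlaplace hlam.le
  set v : ℝ := (1 + |u|) / 2 with hvdef
  have hv : 0 < v := by positivity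
  have hv1 : v < 1 := by rw [hvdef]; linarith
  have huv : |u| < v := by rw [hvdef]; linarith [abs_nonneg u]
  have hvabs : |v| < 1 := by rw [abs_of_pos hv]; exact hv1
  set c : ℝ := f (lam * (1 - u)) with hcc
  -- packaged hypotheses
  have hm0 : ∀ {σ : ℝ}, 0 < σ → fpm lam μ 0 σ = Real.exp (-σ * a) :=
    fun {σ} hσ => fpgf_m0 hlam hlaplace hσ
  have hmnn : ∀ {σ : ℝ}, 0 < σ → ∀ (j : ℕ), 0 ≤ fpm lam μ j σ :=
    fun {σ} hσ j => fpgf_m_nonneg hlam hsupp hσ j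
  have hmle : ∀ {σ : ℝ}, 0 < σ → ∀ (j : ℕ), fpm lam μ j σ ≤ 1 :=
    fun {σ} hσ j => fpgf_m_le_one hlam hprob hsupp hσ j
  have hM : ∀ {σ : ℝ}, 0 < σ → ∀ {w : ℝ}, |w| < 1 →
      (Summable fun j : ℕ => fpm lam μ j σ * w ^ j) ∧
      ∑' j : ℕ, fpm lam μ j σ * w ^ j = Real.exp (-σ * f (lam * (1 - w))) :=
    fun {σ} hσ {w} hw => fpgf_hM hlam hprob hsupp hlaplace hσ hw
  have hconv : ∀ {σ τ : ℝ}, 0 < σ → 0 < τ → ∀ (j : ℕ),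
      fpm lam μ j (σ + τ) = ∑ i ∈ Finset.range (j + 1), fpm lam μ i σ * fpm lam μ (j - i) τ :=
    fun {σ τ} hσ hτ j => fpgf_conv hlam hprob hsupp hlaplace hσ hτ j
  -- bound fpm j σ ≤ v⁻¹ ^ j
  have hmv : ∀ {σ : ℝ}, 0 < σ → ∀ j : ℕ, fpm lam μ j σ ≤ v⁻¹ ^ j := by
    intro σ hσ j
    have hsum := (hM hσ hvabs).1
    have hle : fpm lam μ j σ * v ^ j ≤ ∑' i : ℕ, fpm lam μ i σ * v ^ i :=
      Summable.le_tsum hsum j (fun i _ => mul_nonneg (hmnn hσ i) (pow_nonneg hv.le i))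
    rw [(hM hσ hvabs).2] at hle
    have hfnn : 0 ≤ f (lam * (1 - v)) :=
      fpgf_f_nonneg hprob hsupp hlaplace (by nlinarith)
    have h1 : Real.exp (-σ * f (lam * (1 - v))) ≤ 1 := by
      rw [Real.exp_le_one_iff]
      nlinarith
    have h2 : fpm lam μ j σ * v ^ j ≤ 1 := le_trans hle h1
    rw [inv_pow, inv_eq_one_div]
    exact (le_div_iff₀ (pow_pos hv j)).2 h2
  -- superadditivity
  have hrsup : ∀ {j : ℕ}, 1 ≤ j → ∀ x y : ℝ, 0 < x → 0 < y →
      (fpm lam μ j x * Real.exp (a * x)) + (fpm lam μ j y * Real.exp (a * y))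
        ≤ fpm lam μ j (x + y) * Real.exp (a * (x + y)) :=
    fun {j} hj x y hx hy => fpgf_r_superadd ha hm0 hmnn hconv hj x y hx hy
  -- get b
  obtain ⟨b, hb0, hbnn, hbtend, hKb, hbK⟩ :=
    fpgf_b_exists ha hm0 hmnn hmle hconv hrsup hmv hv
  -- derivatives
  have hD : ∀ j : ℕ, HasDerivAt (fpm lam μ j)
      (-a * fpm lam μ j s + ∑ i ∈ Finset.range j, fpm lam μ i s * b (j - i)) s := by
    intro j
    apply fpgf_hasDerivAt ha hm0 hmnn hmle hconv hbtend
      (K := fun j => 2 * Real.exp a * v⁻¹ ^ j) (fun j => by positivity) ?_ hs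
    intro j hj τ hτ hτ2
    exact hKb j hj τ hτ hτ2
  set Dj : ℕ → ℝ := fun j =>
    -a * fpm lam μ j s + ∑ i ∈ Finset.range j, fpm lam μ i s * b (j - i) with hDj
  -- the densities
  have hqk : ∀ k : ℕ, q (k + 1) s = -∑ j ∈ Finset.range (k + 1), Dj j := by
    intro k
    rw [hq (k + 1) s]
    have hFeq : (fun σ : ℝ => ∫ z, (1 - ∑ j ∈ Finset.range (k + 1),
        Real.exp (-lam * z) * (lam * z) ^ j / (Nat.factorial j)) ∂(μ σ))
        =ᶠ[𝓝 s] (fun σ => 1 - ∑ j ∈ Finset.range (k + 1), fpm lam μ j σ) := by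
      filter_upwards [Ioi_mem_nhds hs] with σ hσ
      have hσ' : (0:ℝ) < σ := hσ
      haveI := hprob σ hσ'
      rw [integral_sub (integrable_const 1)
        (integrable_finset_sum _ (fun j _ => fpgf_int hlam hsupp hσ' j))]
      rw [integral_finset_sum _ (fun j _ => fpgf_int hlam hsupp hσ' j)]
      simp [fpm]
    rw [hFeq.deriv_eq]
    have hDer : HasDerivAt (fun σ => 1 - ∑ j ∈ Finset.range (k + 1), fpm lam μ j σ)
        (-(∑ j ∈ Finset.range (k + 1), Dj j)) s := by
      have hsum : HasDerivAt (fun σ => ∑ j ∈ Finset.range (k + 1), fpm lam μ j σ)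
          (∑ j ∈ Finset.range (k + 1), Dj j) s := HasDerivAt.fun_sum (fun j _ => hD j)
      simpa using hsum.const_sub 1
    rw [hDer.deriv]
  -- summability bounds
  set w : ℝ := |u| / v with hwdef
  have hw1 : w < 1 := (div_lt_one hv).2 huv
  have hwnn : 0 ≤ w := div_nonneg (abs_nonneg u) hv.le
  have hvinn : 0 ≤ v⁻¹ := (inv_pos.2 hv).le
  have hpow : ∀ j : ℕ, v⁻¹ ^ j * |u| ^ j = w ^ j := by
    intro j
    rw [hwdef, div_pow, div_eq_mul_inv, ← inv_pow]
    ring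
  have hDjb : ∀ j : ℕ, |Dj j| ≤ (a + 2 * Real.exp a * j) * v⁻¹ ^ j := by
    intro j
    have h1 : |(-a) * fpm lam μ j s| ≤ a * v⁻¹ ^ j := by
      rw [abs_mul, abs_neg, abs_of_nonneg ha, abs_of_nonneg (hmnn hs j)]
      exact mul_le_mul_of_nonneg_left (hmv hs j) ha
    have h2 : |∑ i ∈ Finset.range j, fpm lam μ i s * b (j - i)|
        ≤ 2 * Real.exp a * j * v⁻¹ ^ j := by
      calc |∑ i ∈ Finset.range j, fpm lam μ i s * b (j - i)|
          ≤ ∑ i ∈ Finset.range j, |fpm lam μ i s * b (j - i)| :=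
            Finset.abs_sum_le_sum_abs _ _
        _ ≤ ∑ _i ∈ Finset.range j, 2 * Real.exp a * v⁻¹ ^ j := by
            apply Finset.sum_le_sum
            intro i hi
            have hij : i ≤ j := le_of_lt (Finset.mem_range.1 hi)
            rw [abs_mul, abs_of_nonneg (hmnn hs i), abs_of_nonneg (hbnn (j - i))]
            calc fpm lam μ i s * b (j - i)
                ≤ v⁻¹ ^ i * (2 * Real.exp a * v⁻¹ ^ (j - i)) := by
                  apply mul_le_mul (hmv hs i) (hbK (j - i)) (hbnn _)
                  positivity
              _ = 2 * Real.exp a * (v⁻¹ ^ i * v⁻¹ ^ (j - i)) := by ring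
              _ = 2 * Real.exp a * v⁻¹ ^ j := by
                  rw [← pow_add, Nat.add_sub_cancel' hij]
        _ = 2 * Real.exp a * j * v⁻¹ ^ j := by
            rw [Finset.sum_const, Finset.card_range]
            push_cast
            ring
    calc |Dj j| ≤ |(-a) * fpm lam μ j s|
          + |∑ i ∈ Finset.range j, fpm lam μ i s * b (j - i)| := by
          rw [hDj]; exact abs_add_le _ _
      _ ≤ a * v⁻¹ ^ j + 2 * Real.exp a * j * v⁻¹ ^ j := by linarith
      _ = (a + 2 * Real.exp a * j) * v⁻¹ ^ j := by ring
  have hgrow : Summable (fun j : ℕ => (a + 2 * Real.exp a * j) * w ^ j) := by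
    have h1 : Summable (fun j : ℕ => a * w ^ j) :=
      (summable_geometric_of_lt_one hwnn hw1).mul_left a
    have h2 : Summable (fun j : ℕ => (2 * Real.exp a) * ((j : ℝ) ^ 1 * w ^ j)) :=
      (summable_pow_mul_geometric_of_norm_lt_one (R := ℝ) 1
        (by rwa [Real.norm_eq_abs, abs_of_nonneg hwnn])).mul_left _
    apply (h1.add h2).congr
    intro j
    push_cast
    ring
  have hDnorm : Summable (fun j : ℕ => ‖Dj j * u ^ j‖) := by
    apply hgrow.of_nonneg_of_le (fun j => norm_nonneg _)
    intro j
    rw [Real.norm_eq_abs, abs_mul, abs_pow]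
    calc |Dj j| * |u| ^ j ≤ ((a + 2 * Real.exp a * j) * v⁻¹ ^ j) * |u| ^ j :=
          mul_le_mul_of_nonneg_right (hDjb j) (pow_nonneg (abs_nonneg u) j)
      _ = (a + 2 * Real.exp a * j) * (v⁻¹ ^ j * |u| ^ j) := by ring
      _ = (a + 2 * Real.exp a * j) * w ^ j := by rw [hpow j]
  have hbu : Summable (fun l : ℕ => ‖b l * u ^ l‖) := by
    apply ((summable_geometric_of_lt_one hwnn hw1).mul_left (2 * Real.exp a)).of_nonneg_of_le
      (fun l => norm_nonneg _)
    intro l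
    rw [Real.norm_eq_abs, abs_mul, abs_pow, abs_of_nonneg (hbnn l)]
    calc b l * |u| ^ l ≤ (2 * Real.exp a * v⁻¹ ^ l) * |u| ^ l :=
          mul_le_mul_of_nonneg_right (hbK l) (pow_nonneg (abs_nonneg u) l)
      _ = 2 * Real.exp a * (v⁻¹ ^ l * |u| ^ l) := by ring
      _ = 2 * Real.exp a * w ^ l := by rw [hpow l]
  have hmu : Summable (fun i : ℕ => ‖fpm lam μ i s * u ^ i‖) := by
    apply (summable_geometric_of_lt_one (abs_nonneg u) hu).of_nonneg_of_le
      (fun i => norm_nonneg _)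
    intro i
    rw [Real.norm_eq_abs, abs_mul, abs_pow, abs_of_nonneg (hmnn hs i)]
    calc fpm lam μ i s * |u| ^ i ≤ 1 * |u| ^ i :=
          mul_le_mul_of_nonneg_right (hmle hs i) (pow_nonneg (abs_nonneg u) i)
      _ = |u| ^ i := one_mul _
  -- B-series value
  have hBval : ∑' l : ℕ, b l * u ^ l = a - c :=
    fpgf_B_val ha hm0 hM hmnn hb0 hbnn hbtend hKb hv hv1 huv
  have hMs := hM hs hu
  -- Cauchy product : second part of D
  have hconvterm : ∀ n : ℕ, (∑ kl ∈ Finset.HasAntidiagonal.antidiagonal n,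
      (fpm lam μ kl.1 s * u ^ kl.1) * (b kl.2 * u ^ kl.2))
      = (∑ i ∈ Finset.range n, fpm lam μ i s * b (n - i)) * u ^ n := by
    intro n
    have h1 : (∑ kl ∈ Finset.HasAntidiagonal.antidiagonal n,
        (fpm lam μ kl.1 s * u ^ kl.1) * (b kl.2 * u ^ kl.2))
        = ∑ kl ∈ Finset.HasAntidiagonal.antidiagonal n, (fpm lam μ kl.1 s * b kl.2) * u ^ n := by
      apply Finset.sum_congr rfl
      intro kl hkl
      have := Finset.HasAntidiagonal.mem_antidiagonal.1 hkl
      rw [← this, pow_add]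
      ring
    rw [h1, ← Finset.sum_mul]
    congr 1
    rw [Finset.Nat.sum_antidiagonal_eq_sum_range_succ (f := fun k l => fpm lam μ k s * b l),
      Finset.sum_range_succ]
    simp [hb0]
  have hcp1 : ∑' n : ℕ, (∑ i ∈ Finset.range n, fpm lam μ i s * b (n - i)) * u ^ n
      = Real.exp (-s * c) * (a - c) := by
    have h := tsum_mul_tsum_eq_tsum_sum_antidiagonal_of_summable_norm hmu hbu
    rw [hMs.2, hBval] at h
    rw [← tsum_congr hconvterm, ← h]
  have hs2 : Summable (fun n : ℕ =>
      (∑ i ∈ Finset.range n, fpm lam μ i s * b (n - i)) * u ^ n) := by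
    have := summable_sum_mul_antidiagonal_of_summable_norm'
      (f := fun i : ℕ => fpm lam μ i s * u ^ i) (g := fun l : ℕ => b l * u ^ l)
      hmu (hmu.of_norm) hbu (hbu.of_norm)
    exact this.congr hconvterm
  -- value of the D series
  have hDval : ∑' j : ℕ, Dj j * u ^ j = -c * Real.exp (-s * c) := by
    have hsplit : ∀ j : ℕ, Dj j * u ^ j = (-a) * (fpm lam μ j s * u ^ j)
        + (∑ i ∈ Finset.range j, fpm lam μ i s * b (j - i)) * u ^ j := by
      intro j
      rw [hDj]
      ring
    rw [tsum_congr hsplit, Summable.tsum_add ((hMs.1).mul_left (-a)) hs2, tsum_mul_left, hMs.2, hcp1]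
    ring
  -- final Cauchy product with geometric series
  have hgnorm : Summable (fun i : ℕ => ‖u ^ (i + 1)‖) := by
    apply ((summable_geometric_of_lt_one (abs_nonneg u) hu).mul_left |u|).congr
    intro i
    rw [Real.norm_eq_abs, abs_pow, pow_succ]
    ring
  have hgeo : ∑' i : ℕ, u ^ (i + 1) = u * (1 - u)⁻¹ := by
    have h1 : ∀ i : ℕ, u ^ (i + 1) = u * u ^ i := fun i => by rw [pow_succ]; ring
    rw [tsum_congr h1, tsum_mul_left, tsum_geometric_of_norm_lt_one
      (by rwa [Real.norm_eq_abs])]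
  have hfincp : ∀ k : ℕ, (∑ kl ∈ Finset.HasAntidiagonal.antidiagonal k, (Dj kl.1 * u ^ kl.1) * u ^ (kl.2 + 1))
      = (∑ j ∈ Finset.range (k + 1), Dj j) * u ^ (k + 1) := by
    intro k
    have h1 : (∑ kl ∈ Finset.HasAntidiagonal.antidiagonal k, (Dj kl.1 * u ^ kl.1) * u ^ (kl.2 + 1))
        = ∑ kl ∈ Finset.HasAntidiagonal.antidiagonal k, Dj kl.1 * u ^ (k + 1) := by
      apply Finset.sum_congr rfl
      intro kl hkl
      have := Finset.HasAntidiagonal.mem_antidiagonal.1 hkl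
      rw [mul_assoc, ← pow_add]
      congr 2
      omega
    rw [h1, ← Finset.sum_mul]
    congr 1
    rw [Finset.Nat.sum_antidiagonal_eq_sum_range_succ (f := fun k _l => Dj k)]
  have hmain := tsum_mul_tsum_eq_tsum_sum_antidiagonal_of_summable_norm
    (f := fun j : ℕ => Dj j * u ^ j) (g := fun i : ℕ => u ^ (i + 1)) hDnorm hgnorm
  rw [hDval, hgeo, tsum_congr hfincp] at hmain
  -- conclude
  have hfinal : ∑' k : ℕ, u ^ (k + 1) * q (k + 1) s
      = -∑' k : ℕ, (∑ j ∈ Finset.range (k + 1), Dj j) * u ^ (k + 1) := by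
    rw [← tsum_neg]
    apply tsum_congr
    intro k
    rw [hqk k]
    ring
  rw [hfinal, ← hmain]
  rw [div_eq_mul_inv]
  ring
end
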